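/- arXiv:1805.08143 — 6 statements merged into one kernel-verified Lean document; each statement's English description precedes it below -/
import Mathlib

section
/- For a tree T on n vertices, the Wiener index of T equals the sum over all edges e of T of the product n(T1)·n(T2), where T1 and T2 are the two connected components of T − e. -/
open SimpleGraph Finset
open scoped Classical

/-- The Steiner distance of a vertex set `S` in `G`: the minimum number of edges of a
connected subgraph of `G` whose vertex set contains `S`. -/
noncomputable def steinerDist {V : Type*} (G : SimpleGraph V) (S : Set V) : ℕ :=
  sInf {m | ∃ H : G.Subgraph, H.Connected ∧ S ⊆ H.verts ∧ H.edgeSet.ncard = m}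

/-- The Steiner `k`-Wiener index: the sum of Steiner distances over all `k`-element
vertex subsets. -/
noncomputable def steinerWiener {V : Type*} [Fintype V] (G : SimpleGraph V) (k : ℕ) : ℕ :=
  ∑ S ∈ Finset.powersetCard k (Finset.univ : Finset V), steinerDist G (↑S : Set V)

/-- `v` is a cut vertex of `G`: `G` is connected but deleting `v` disconnects it. -/
def IsCutVertex {V : Type*} (G : SimpleGraph V) (v : V) : Prop :=
  G.Connected ∧ ¬ (G.induce {u | u ≠ v}).Connected

/-- The induced subgraph on `B` is connected and has no cut vertex. -/
def IsBiconnectedSet {V : Type*} (G : SimpleGraph V) (B : Set V) : Prop :=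
  (G.induce B).Connected ∧
    ∀ v ∈ B, (B \ {v}).Nonempty → (G.induce (B \ {v})).Connected

/-- `B` is a block of `G`: a maximal set inducing a connected subgraph without cut
vertex (with at least two vertices). -/
def IsBlock {V : Type*} (G : SimpleGraph V) (B : Set V) : Prop :=
  2 ≤ B.ncard ∧ IsBiconnectedSet G B ∧
    ∀ B' : Set V, B ⊆ B' → 2 ≤ B'.ncard → IsBiconnectedSet G B' → B' = B

/-- A block graph: a connected graph in which every block is a clique. -/
def IsBlockGraph {V : Type*} (G : SimpleGraph V) : Prop :=
  G.Connected ∧ ∀ B : Set V, IsBlock G B → G.IsClique B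

section WienerAux
variable {V : Type*}

private lemma reach_or (T : SimpleGraph V) {a b : V} :
    ∀ {w : V}, T.Walk w a →
      (T.deleteEdges {s(a,b)}).Reachable w a ∨ (T.deleteEdges {s(a,b)}).Reachable w b := by
  intro w p
  induction p with
  | nil => exact Or.inl (Reachable.refl _)
  | @cons c x e h q ih =>
    by_cases he : s(c, x) = s(e, b)
    · rw [Sym2.eq_iff] at he
      rcases he with ⟨rfl, rfl⟩ | ⟨rfl, rfl⟩
      · exact Or.inl (Reachable.refl _)
      · exact Or.inr (Reachable.refl _)
    · have h' : (T.deleteEdges {s(e,b)}).Adj c x := by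
        rw [SimpleGraph.deleteEdges_adj]; exact ⟨h, by simpa using he⟩
      exact ih.imp (h'.reachable.trans) (h'.reachable.trans)

private lemma not_reach (T : SimpleGraph V) (hA : T.IsAcyclic) {a b : V} (hab : T.Adj a b) :
    ¬ (T.deleteEdges {s(a,b)}).Reachable a b := by
  have h := (isAcyclic_iff_forall_adj_isBridge.mp hA) hab
  rw [isBridge_iff] at h
  exact h

private lemma dart_reach {T : SimpleGraph V} :
    ∀ {u v : V} (p : T.Walk u v), p.IsPath → ∀ d ∈ p.darts,
      (T.deleteEdges {d.edge}).Reachable u d.fst ∧ (T.deleteEdges {d.edge}).Reachable d.snd v := by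
  intro u v p
  induction p with
  | nil => intro _ d hd; simp at hd
  | @cons u x v h q ih =>
    intro hp d hd
    rw [SimpleGraph.Walk.darts_cons, List.mem_cons] at hd
    rcases hd with rfl | hd
    · refine ⟨Reachable.refl _, ?_⟩
      refine ⟨q.toDeleteEdges _ ?_⟩
      intro e he
      simp only [Set.mem_singleton_iff]
      rintro rfl
      exact ((SimpleGraph.Walk.cons_isPath_iff _ _).mp hp).2 (q.fst_mem_support_of_mem_edges he)
    · have hq := ((SimpleGraph.Walk.cons_isPath_iff _ _).mp hp).1
      obtain ⟨h1, h2⟩ := ih hq d hd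
      have hne : s(u, x) ≠ d.edge := by
        intro hEq
        have hmem : d.edge ∈ q.edges := List.mem_map_of_mem hd
        rw [← hEq] at hmem
        exact ((SimpleGraph.Walk.cons_isPath_iff _ _).mp hp).2
          (q.fst_mem_support_of_mem_edges hmem)
      have hadj : (T.deleteEdges {d.edge}).Adj u x := by
        rw [SimpleGraph.deleteEdges_adj]; exact ⟨h, by simpa using hne⟩
      exact ⟨hadj.reachable.trans h1, h2⟩

private lemma dist_eq_sum {T : SimpleGraph V} [Fintype V] (hT : T.IsTree) (u v : V) :
    T.dist u v = ∑ a : V, ∑ b : V,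
      (if T.Adj a b ∧ (T.deleteEdges {s(a,b)}).Reachable a u ∧
          (T.deleteEdges {s(a,b)}).Reachable b v then 1 else 0) := by
  obtain ⟨q, hq⟩ := (hT.isConnected u v).exists_walk_length_eq_dist
  set p := q.bypass with hpdef
  have hp : p.IsPath := q.bypass_isPath
  have hlen : p.length = T.dist u v :=
    le_antisymm (hq ▸ q.length_bypass_le) (T.dist_le p)
  have key : ∀ a b : V,
      (T.Adj a b ∧ (T.deleteEdges {s(a,b)}).Reachable a u ∧
        (T.deleteEdges {s(a,b)}).Reachable b v) ↔
      ∃ d ∈ p.darts, d.toProd = (a, b) := by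
    intro a b
    constructor
    · rintro ⟨hab, hau, hbv⟩
      have hnr : ¬ (T.deleteEdges {s(a,b)}).Reachable a b := not_reach T hT.2 hab
      have hmem : s(a, b) ∈ p.edges := by
        by_contra hne
        have hr : (T.deleteEdges {s(a,b)}).Reachable u v := by
          refine ⟨p.toDeleteEdges _ ?_⟩
          intro e he
          simp only [Set.mem_singleton_iff]
          rintro rfl
          exact hne he
        exact hnr (hau.trans (hr.trans hbv.symm))
      obtain ⟨d, hd, hde⟩ := List.mem_map.mp hmem
      rcases dart_edge_eq_mk'_iff'.mp hde with ⟨h1, h2⟩ | ⟨h1, h2⟩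
      · exact ⟨d, hd, Prod.ext h1 h2⟩
      · exfalso
        obtain ⟨r1, r2⟩ := dart_reach p hp d hd
        rw [hde, h1] at r1
        exact hnr (hau.trans r1)
    · rintro ⟨d, hd, hdp⟩
      obtain ⟨r1, r2⟩ := dart_reach p hp d hd
      have hde : d.edge = s(a, b) := by
        show s(d.toProd.1, d.toProd.2) = _
        rw [hdp]
      have hfst : d.fst = a := by rw [show d.fst = d.toProd.1 from rfl, hdp]
      have hsnd : d.snd = b := by rw [show d.snd = d.toProd.2 from rfl, hdp]
      rw [hde, hfst] at r1
      rw [hde, hsnd] at r2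
      exact ⟨by rw [← hfst, ← hsnd]; exact d.adj, r1.symm, r2⟩
  calc T.dist u v = p.length := hlen.symm
    _ = (p.darts.map SimpleGraph.Dart.toProd).toFinset.card := by
        rw [List.toFinset_card_of_nodup
          ((SimpleGraph.Walk.darts_nodup_of_support_nodup hp.support_nodup).map
            (fun d₁ d₂ h => SimpleGraph.Dart.ext _ _ h)),
          List.length_map, SimpleGraph.Walk.length_darts]
    _ = ((Finset.univ : Finset (V × V)).filter (fun x : V × V =>
          T.Adj x.1 x.2 ∧ (T.deleteEdges {s(x.1,x.2)}).Reachable x.1 u ∧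
          (T.deleteEdges {s(x.1,x.2)}).Reachable x.2 v)).card := by
        congr 1
        ext ⟨a, b⟩
        simp only [List.mem_toFinset, List.mem_map, Finset.mem_filter, Finset.mem_univ,
          true_and]
        rw [key a b]
    _ = ∑ a : V, ∑ b : V, _ := by
        rw [← Finset.sum_product']
        rw [← Nat.cast_id ((Finset.univ.filter _).card), Finset.sum_boole, Finset.univ_product_univ]

private lemma ncard_eq_sum_ite [Fintype V] (P : V → Prop) :
    {w : V | P w}.ncard = ∑ u : V, if P u then 1 else 0 := by
  rw [Set.ncard_eq_toFinset_card', Set.toFinset_setOf]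
  symm
  rw [← Nat.cast_id (∑ u : V, if P u then 1 else 0), Finset.sum_boole]
  simp

end WienerAux

/-- Wiener's formula: for a tree, the sum of all distances equals the sum over edges of the
product of the orders of the two components obtained by deleting the edge.
(Both sides are stated over ordered pairs, hence count each contribution twice.) -/
theorem stmt0 {V : Type*} [Fintype V] (T : SimpleGraph V) (hT : T.IsTree) :
    ∑ u : V, ∑ v : V, T.dist u v =
      ∑ u : V, ∑ v : V, if T.Adj u v then
        {w : V | (T.deleteEdges {s(u, v)}).Reachable u w}.ncard *
          {w : V | (T.deleteEdges {s(u, v)}).Reachable v w}.ncard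
      else 0 := by
  calc ∑ u : V, ∑ v : V, T.dist u v
      = ∑ u : V, ∑ v : V, ∑ a : V, ∑ b : V,
          (if T.Adj a b ∧ (T.deleteEdges {s(a,b)}).Reachable a u ∧
            (T.deleteEdges {s(a,b)}).Reachable b v then 1 else 0) := by
        refine Finset.sum_congr rfl fun u _ => Finset.sum_congr rfl fun v _ => ?_
        exact dist_eq_sum hT u v
    _ = ∑ a : V, ∑ b : V, ∑ u : V, ∑ v : V,
          (if T.Adj a b ∧ (T.deleteEdges {s(a,b)}).Reachable a u ∧
            (T.deleteEdges {s(a,b)}).Reachable b v then 1 else 0) := by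
        conv_lhs => enter [2, u]; rw [Finset.sum_comm]
        rw [Finset.sum_comm]
        conv_lhs => enter [2, a, 2, u]; rw [Finset.sum_comm]
        conv_lhs => enter [2, a]; rw [Finset.sum_comm]
    _ = ∑ u : V, ∑ v : V, if T.Adj u v then
          {w : V | (T.deleteEdges {s(u, v)}).Reachable u w}.ncard *
            {w : V | (T.deleteEdges {s(u, v)}).Reachable v w}.ncard
        else 0 := by
        refine Finset.sum_congr rfl fun a _ => Finset.sum_congr rfl fun b _ => ?_
        by_cases hab : T.Adj a b
        · simp only [hab, true_and, if_true]
          rw [ncard_eq_sum_ite, ncard_eq_sum_ite, Finset.sum_mul_sum]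
          refine Finset.sum_congr rfl fun x _ => Finset.sum_congr rfl fun y _ => ?_
          by_cases h1 : (T.deleteEdges {s(a,b)}).Reachable a x <;>
            by_cases h2 : (T.deleteEdges {s(a,b)}).Reachable b y <;>
            simp [h1, h2]
        · simp [hab]
end

section
/- Let G be a connected block graph on n vertices isometrically embedded in a Hamming graph (Cartesian product of complete graphs) via coordinates indexed by its blocks B_1,…,B_t. Then for any set S of k vertices of G with 2 ≤ k ≤ n, the Steiner distance d(S) equals (∑_{i=1}^t ℓ_i(S)) − t, where ℓ_i(S) is the number of distinct values among the i-th coordinates of the vertices of S. -/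
open SimpleGraph Finset
open scoped Classical

set_option linter.unusedSectionVars false
set_option maxHeartbeats 1000000

section Aux
variable {V : Type*} [Fintype V] [DecidableEq V] {G : SimpleGraph V}

lemma induce_reach {A : Set V} : ∀ {x y : V} (p : G.Walk x y)
    (_ : ∀ z ∈ p.support, z ∈ A) (hx : x ∈ A) (hy : y ∈ A),
    (G.induce A).Reachable ⟨x, hx⟩ ⟨y, hy⟩ := by
  intro x y p
  induction p with
  | nil => intro _ hx hy; rfl
  | @cons x b y h q ih =>
    intro hsup hx hy
    have hb : b ∈ A := hsup b (by simp)
    have : (G.induce A).Adj ⟨x, hx⟩ ⟨b, hb⟩ := h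
    exact (this.reachable).trans (ih (fun z hz => hsup z (by simp [hz])) hb hy)

/-- Two cliques sharing a vertex induce a connected graph on their union. -/
lemma cliques_union_connected {P Q : Set V} (hP : G.IsClique P) (hQ : G.IsClique Q)
    {z : V} (hzP : z ∈ P) (hzQ : z ∈ Q) : (G.induce (P ∪ Q)).Connected := by
  rw [connected_iff]
  constructor
  · intro a b
    have key : ∀ c : ↥(P ∪ Q), (G.induce (P ∪ Q)).Reachable c ⟨z, Or.inl hzP⟩ := by
      rintro ⟨c, hc | hc⟩
      · rcases eq_or_ne c z with rfl | hne
        · rfl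
        · exact (show (G.induce (P ∪ Q)).Adj ⟨c, Or.inl hc⟩ ⟨z, Or.inl hzP⟩ from
            hP hc hzP hne).reachable
      · rcases eq_or_ne c z with rfl | hne
        · rfl
        · exact (show (G.induce (P ∪ Q)).Adj ⟨c, Or.inr hc⟩ ⟨z, Or.inl hzP⟩ from
            hQ hc hzQ hne).reachable
    exact (key a).trans (key b).symm
  · exact ⟨⟨z, Or.inl hzP⟩⟩

lemma clique_induce_connected {A : Set V} (hA : G.IsClique A) (hne : A.Nonempty) :
    (G.induce A).Connected := by
  obtain ⟨z, hz⟩ := hne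
  have := cliques_union_connected (G := G) hA hA hz hz
  rwa [Set.union_self] at this

lemma bic_of_clique {A : Set V} (hA : G.IsClique A) (hne : A.Nonempty) :
    IsBiconnectedSet G A :=
  ⟨clique_induce_connected hA hne, fun _ _ hne' =>
    clique_induce_connected (hA.subset Set.diff_subset) hne'⟩

lemma bic_union_cliques {P Q : Set V} (hP : G.IsClique P) (hQ : G.IsClique Q)
    {x y : V} (hx : x ∈ P ∩ Q) (hy : y ∈ P ∩ Q) (hxy : x ≠ y) :
    IsBiconnectedSet G (P ∪ Q) := by
  constructor
  · exact cliques_union_connected hP hQ hx.1 hx.2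
  · intro v _ _
    have hPQ : (P ∪ Q) \ {v} = (P \ {v}) ∪ (Q \ {v}) := Set.union_diff_distrib
    rw [hPQ]
    rcases eq_or_ne x v with rfl | hne
    · exact cliques_union_connected (hP.subset Set.diff_subset)
        (hQ.subset Set.diff_subset) ⟨hy.1, hxy.symm⟩ ⟨hy.2, hxy.symm⟩
    · exact cliques_union_connected (hP.subset Set.diff_subset)
        (hQ.subset Set.diff_subset) ⟨hx.1, hne⟩ ⟨hx.2, hne⟩

lemma exists_block_superset {C : Set V} (hC : IsBiconnectedSet G C) (h2 : 2 ≤ C.ncard) :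
    ∃ B : Set V, IsBlock G B ∧ C ⊆ B := by
  classical
  set F : Set (Set V) := {B | C ⊆ B ∧ 2 ≤ B.ncard ∧ IsBiconnectedSet G B} with hF
  have hFne : F.Nonempty := ⟨C, subset_rfl, h2, hC⟩
  obtain ⟨B, hBF, hBmax⟩ := Set.Finite.exists_maximalFor Set.ncard F (Set.toFinite F) hFne
  refine ⟨B, ⟨hBF.2.1, hBF.2.2, ?_⟩, hBF.1⟩
  intro B' hsub h2' hbic'
  have hB'F : B' ∈ F := ⟨hBF.1.trans hsub, h2', hbic'⟩
  have hle : B.ncard ≤ B'.ncard := Set.ncard_le_ncard hsub (Set.toFinite B')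
  have := hBmax hB'F hle
  exact (Set.eq_of_subset_of_ncard_le hsub this.ge (Set.toFinite B')).symm

/-- A distinct pair of vertices in two blocks forces the blocks to be equal. -/
lemma block_eq_of_two_shared {B1 B2 : Set V} (h1 : IsBlock G B1) (h2 : IsBlock G B2)
    (hc1 : G.IsClique B1) (hc2 : G.IsClique B2)
    {x y : V} (hx : x ∈ B1 ∩ B2) (hy : y ∈ B1 ∩ B2) (hxy : x ≠ y) : B1 = B2 := by
  have hbic := bic_union_cliques hc1 hc2 hx hy hxy
  have hn : 2 ≤ (B1 ∪ B2).ncard :=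
    le_trans h1.1 (Set.ncard_le_ncard Set.subset_union_left (Set.toFinite _))
  have e1 := h1.2.2 (B1 ∪ B2) Set.subset_union_left hn hbic
  have e2 := h2.2.2 (B1 ∪ B2) Set.subset_union_right hn hbic
  exact e1.symm.trans e2

end Aux
section Aux2
variable {V : Type*} [Fintype V] [DecidableEq V] {G : SimpleGraph V}

/-- A connected finite graph has at least `card - 1` edges. -/
lemma conn_card_le {W : Type*} [Fintype W] [DecidableEq W] (Q : SimpleGraph W)
    (hQ : Q.Connected) : Fintype.card W ≤ Q.edgeSet.ncard + 1 := by
  classical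
  have hne : Nonempty W := hQ.nonempty
  obtain ⟨v0⟩ := hne
  set P : W → Sym2 W → Prop := fun w e =>
    e ∈ Q.edgeSet ∧ ∃ a, e = s(w, a) ∧ Q.dist v0 a + 1 = Q.dist v0 w with hP
  have hex : ∀ w, w ≠ v0 → ∃ e, P w e := by
    intro w hw
    have hd0 : Q.dist v0 w ≠ 0 :=
      dist_ne_zero_iff_ne_and_reachable.2 ⟨(Ne.symm hw), hQ.preconnected v0 w⟩
    obtain ⟨p, hp⟩ := (hQ.preconnected v0 w).exists_walk_length_eq_dist
    rcases hrev : p.reverse with _ | ⟨h, q⟩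
    · exfalso
      have : p.reverse.length = 0 := by rw [hrev]; rfl
      rw [SimpleGraph.Walk.length_reverse, hp] at this
      exact hd0 this
    · rename_i a
      have hlen : q.length + 1 = Q.dist v0 w := by
        have : p.reverse.length = q.length + 1 := by rw [hrev]; simp
        rw [SimpleGraph.Walk.length_reverse, hp] at this
        omega
      have hda : Q.dist v0 a ≤ q.length := by
        have := SimpleGraph.dist_le q.reverse
        simpa using this
      have hup : Q.dist v0 w ≤ Q.dist v0 a + 1 := by
        have htri := hQ.dist_triangle (u := v0) (v := a) (w := w)
        have : Q.dist a w = 1 := dist_eq_one_iff_adj.2 h.symm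
        omega
      have : Q.dist v0 a + 1 = Q.dist v0 w := by omega
      exact ⟨s(w, a), Q.mem_edgeSet.2 h, a, rfl, this⟩
  set F : W → Sym2 W := fun w => if h : ∃ e, P w e then h.choose else s(w, w) with hFdef
  have hPF : ∀ w, w ≠ v0 → P w (F w) := by
    intro w hw
    have h := hex w hw
    simp only [hFdef, dif_pos h]
    exact h.choose_spec
  have hinj : Set.InjOn F ↑(Finset.univ.erase v0) := by
    intro w hw w' hw' heq
    simp only [Finset.coe_erase, Set.mem_diff] at hw hw'
    obtain ⟨he, a, ha, hda⟩ := hPF w (by simpa using hw.2)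
    obtain ⟨he', a', ha', hda'⟩ := hPF w' (by simpa using hw'.2)
    have hss : (s(w, a) : Sym2 W) = s(w', a') := by rw [← ha, ← ha', heq]
    rcases Sym2.eq_iff.1 hss with ⟨rfl, rfl⟩ | ⟨rfl, rfl⟩
    · rfl
    · omega
  have hmaps : ∀ w ∈ Finset.univ.erase v0, F w ∈ Q.edgeFinset := by
    intro w hw
    exact mem_edgeFinset.2 (hPF w (Finset.ne_of_mem_erase hw)).1
  have hcard : (Finset.univ.erase v0).card ≤ Q.edgeFinset.card :=
    Finset.card_le_card_of_injOn F hmaps hinj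
  have h1 : (Finset.univ.erase v0).card = Fintype.card W - 1 := by
    rw [Finset.card_erase_of_mem (Finset.mem_univ v0), Finset.card_univ]
  have h2 : Q.edgeFinset.card = Q.edgeSet.ncard := by
    rw [Set.ncard_eq_toFinset_card']
    congr 1
  have h3 : 1 ≤ Fintype.card W := Fintype.card_pos_iff.2 ⟨v0⟩
  omega

end Aux2
section Aux3
variable {V : Type*} [Fintype V] [DecidableEq V] {G : SimpleGraph V}

/-- In a connected subgraph, the number of distinct values of a function that only
changes across edges inside `Bset` is at most one more than the number of such edges. -/
lemma change_bound (H : G.Subgraph) (hH : H.Connected) (Bset : Set V) (g : V → ℕ)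
    (hchange : ∀ x y : V, H.Adj x y → ¬(x ∈ Bset ∧ y ∈ Bset) → g x = g y) :
    (g '' H.verts).ncard ≤ (H.edgeSet ∩ {e | ∀ x ∈ e, x ∈ Bset}).ncard + 1 := by
  classical
  set Values : Set ℕ := g '' H.verts with hV
  haveI : Fintype ↥Values := ((H.verts.toFinite.image g).fintype)
  set Q : SimpleGraph ↥Values :=
    { Adj := fun c c' => c ≠ c' ∧ ∃ x y : V, H.Adj x y ∧ x ∈ Bset ∧ y ∈ Bset ∧
        g x = (c : ℕ) ∧ g y = (c' : ℕ),
      symm := ⟨by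
        rintro c c' ⟨hne, x, y, hadj, hx, hy, hgx, hgy⟩
        exact ⟨hne.symm, y, x, hadj.symm, hy, hx, hgy, hgx⟩⟩,
      loopless := ⟨fun c hc => hc.1 rfl⟩ } with hQ
  have hQconn : Q.Connected := by
    rw [connected_iff]
    constructor
    · rintro ⟨c, hc⟩ ⟨c', hc'⟩
      obtain ⟨x, hx, rfl⟩ := hc
      obtain ⟨y, hy, rfl⟩ := hc'
      have key : ∀ (a b : ↥H.verts) (w : H.coe.Walk a b),
          Q.Reachable ⟨g a, ⟨a, a.2, rfl⟩⟩ ⟨g b, ⟨b, b.2, rfl⟩⟩ := by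
        intro a b w
        induction w with
        | nil => rfl
        | @cons a m b hadj w ih =>
          have hadj' : H.Adj ↑a ↑m := hadj
          by_cases hmem : (↑a : V) ∈ Bset ∧ (↑m : V) ∈ Bset
          · by_cases hval : g ↑a = g ↑m
            · have : (⟨g ↑a, ⟨a, a.2, rfl⟩⟩ : ↥Values) = ⟨g ↑m, ⟨m, m.2, rfl⟩⟩ :=
                Subtype.ext hval
              rw [this]; exact ih
            · refine (Reachable.trans ?_ ih)
              exact (show Q.Adj ⟨g ↑a, ⟨a, a.2, rfl⟩⟩ ⟨g ↑m, ⟨m, m.2, rfl⟩⟩ from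
                ⟨fun hcc => hval (congrArg Subtype.val hcc), ↑a, ↑m, hadj', hmem.1,
                  hmem.2, rfl, rfl⟩).reachable
          · have : g ↑a = g ↑m := hchange _ _ hadj' hmem
            have heq : (⟨g ↑a, ⟨a, a.2, rfl⟩⟩ : ↥Values) = ⟨g ↑m, ⟨m, m.2, rfl⟩⟩ :=
              Subtype.ext this
            rw [heq]; exact ih
      obtain ⟨w⟩ := hH.preconnected ⟨x, hx⟩ ⟨y, hy⟩
      exact key _ _ w
    · obtain ⟨x, hx⟩ := hH.nonempty
      exact ⟨⟨g x, ⟨x, hx, rfl⟩⟩⟩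
  have hcardQ : Fintype.card ↥Values ≤ Q.edgeSet.ncard + 1 := conn_card_le Q hQconn
  -- injection from Q-edges into H-edges inside Bset
  set T : Set (Sym2 V) := {e | ∀ x ∈ e, x ∈ Bset} with hT
  set R : Sym2 ↥Values → Sym2 V → Prop := fun e e' =>
    e' ∈ H.edgeSet ∧ e' ∈ T ∧ Sym2.map (fun c : ↥Values => (c : ℕ)) e = Sym2.map g e'
    with hR
  have hex : ∀ e ∈ Q.edgeSet, ∃ e', R e e' := by
    intro e he
    induction e with
    | _ c c' =>
      obtain ⟨hne, x, y, hadj, hx, hy, hgx, hgy⟩ := he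
      refine ⟨s(x, y), Subgraph.mem_edgeSet.2 hadj, ?_, ?_⟩
      · intro z hz; rcases Sym2.mem_iff.1 hz with rfl | rfl; exacts [hx, hy]
      · simp [hgx, hgy]
  obtain ⟨x0, hx0⟩ := hH.nonempty
  set φ : Sym2 ↥Values → Sym2 V := fun e =>
    if h : ∃ e', R e e' then h.choose else Sym2.map (fun _ => x0) e with hφ
  have hRφ : ∀ e ∈ Q.edgeSet, R e (φ e) := by
    intro e he
    have h := hex e he
    simp only [hφ, dif_pos h]
    exact h.choose_spec
  have hmaps : ∀ e ∈ Q.edgeSet, φ e ∈ H.edgeSet ∩ T := fun e he =>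
    ⟨(hRφ e he).1, (hRφ e he).2.1⟩
  have hinj : Set.InjOn φ Q.edgeSet := by
    intro e1 h1 e2 h2 heq
    have r1 := (hRφ e1 h1).2.2
    have r2 := (hRφ e2 h2).2.2
    rw [heq] at r1
    have : Sym2.map (fun c : ↥Values => (c : ℕ)) e1
        = Sym2.map (fun c : ↥Values => (c : ℕ)) e2 := by rw [r1, r2]
    exact Sym2.map.injective Subtype.val_injective this
  have hQle : Q.edgeSet.ncard ≤ (H.edgeSet ∩ T).ncard :=
    Set.ncard_le_ncard_of_injOn φ hmaps hinj (Set.toFinite _)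
  have hVcard : Values.ncard = Fintype.card ↥Values := by
    rw [Set.ncard_eq_toFinset_card', Set.toFinset_card]
  omega

end Aux3
section Aux4
variable {V : Type*} [Fintype V] [DecidableEq V] {G : SimpleGraph V}

/-- A vertex on a path can be connected to one of the endpoints avoiding any fixed
other vertex. -/
lemma path_split_avoid {u w : V} {p : G.Walk u w} (hp : p.IsPath) {v x : V}
    (hx : x ∈ p.support) (hxv : x ≠ v) :
    (∃ r : G.Walk u x, v ∉ r.support ∧ ∀ z ∈ r.support, z ∈ p.support) ∨
    (∃ r : G.Walk x w, v ∉ r.support ∧ ∀ z ∈ r.support, z ∈ p.support) := by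
  by_cases hv : v ∈ p.support
  · by_cases hxt : x ∈ (p.takeUntil v hv).support
    · left
      set t := p.takeUntil v hv with ht
      have htp : t.IsPath := hp.takeUntil hv
      refine ⟨t.takeUntil x hxt, ?_, ?_⟩
      · intro hvr
        have hspec := t.take_spec hxt
        have hsup : t.support = (t.takeUntil x hxt).support
            ++ (t.dropUntil x hxt).support.tail := by
          rw [← SimpleGraph.Walk.support_append, hspec]
        have hdisj := List.disjoint_of_nodup_append (hsup ▸ htp.support_nodup)
        have hvd : v ∈ (t.dropUntil x hxt).support := SimpleGraph.Walk.end_mem_support _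
        rw [SimpleGraph.Walk.support_eq_cons] at hvd
        rcases List.mem_cons.1 hvd with rfl | hvd
        · exact hxv rfl
        · exact hdisj hvr hvd
      · intro z hz
        exact (p.support_takeUntil_subset hv)
          ((t.support_takeUntil_subset hxt) hz)
    · right
      have hxd : x ∈ (p.dropUntil v hv).support := by
        have := p.take_spec hv
        have hsup : p.support = (p.takeUntil v hv).support
            ++ (p.dropUntil v hv).support.tail := by
          rw [← SimpleGraph.Walk.support_append, this]
        rw [hsup] at hx
        rcases List.mem_append.1 hx with h | h
        · exact absurd h hxt
        · exact List.mem_of_mem_tail h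
      set d := p.dropUntil v hv with hd
      have hdp : d.IsPath := hp.dropUntil hv
      refine ⟨d.dropUntil x hxd, ?_, ?_⟩
      · intro hvr
        have hsup : d.support = (d.takeUntil x hxd).support
            ++ (d.dropUntil x hxd).support.tail := by
          rw [← SimpleGraph.Walk.support_append, d.take_spec hxd]
        have hdisj := List.disjoint_of_nodup_append (hsup ▸ hdp.support_nodup)
        rw [SimpleGraph.Walk.support_eq_cons] at hvr
        rcases List.mem_cons.1 hvr with rfl | hvr
        · exact hxv rfl
        · exact hdisj (SimpleGraph.Walk.start_mem_support _) hvr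
      · intro z hz
        exact (p.support_dropUntil_subset hv)
          ((d.support_dropUntil_subset hxd) hz)
  · left
    exact ⟨p.takeUntil x hx, fun hc => hv ((p.support_takeUntil_subset hx) hc),
      fun z hz => (p.support_takeUntil_subset hx) hz⟩

end Aux4
section Aux5
variable {V : Type*} [Fintype V] [DecidableEq V] {G : SimpleGraph V}

/-- Two distinct vertices of a block are not reachable after deleting the block's edges. -/
lemma block_no_detour {B : Set V} (hB : IsBlock G B) (hcl : G.IsClique B)
    {u w : V} (hu : u ∈ B) (hw : w ∈ B) (hne : u ≠ w) :
    ¬ (G.deleteEdges {e | ∀ x ∈ e, x ∈ B}).Reachable u w := by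
  intro hr
  classical
  obtain ⟨q⟩ := hr
  have pp := q.toPath
  set p' := pp.1 with hp'def
  have hp' : p'.IsPath := pp.2
  have hedges : ∀ e ∈ p'.edges, e ∈ G.edgeSet := by
    intro e he
    have := p'.edges_subset_edgeSet he
    rw [edgeSet_deleteEdges] at this
    exact this.1
  set pG : G.Walk u w := p'.transfer G hedges with hpGdef
  have hpG : pG.IsPath := hp'.transfer hedges
  have hsup : pG.support = p'.support := SimpleGraph.Walk.support_transfer _ _
  set A : Set V := B ∪ {x | x ∈ pG.support} with hA
  have huA : u ∈ A := Or.inl hu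
  have hwA : w ∈ A := Or.inl hw
  have hsubA : ∀ z ∈ pG.support, z ∈ A := fun z hz => Or.inr hz
  -- A is biconnected
  have hbicA : IsBiconnectedSet G A := by
    constructor
    · rw [connected_iff]
      refine ⟨?_, ⟨⟨u, huA⟩⟩⟩
      intro a b
      have key : ∀ c : ↥A, (G.induce A).Reachable c ⟨u, huA⟩ := by
        rintro ⟨c, hc | hc⟩
        · rcases eq_or_ne c u with rfl | hcu
          · rfl
          · exact (show (G.induce A).Adj ⟨c, Or.inl hc⟩ ⟨u, huA⟩ from
              hcl hc hu hcu).reachable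
        · exact (induce_reach (pG.takeUntil c hc)
            (fun z hz => hsubA z (pG.support_takeUntil_subset hc hz)) huA
            (hsubA c hc)).symm
      exact (key a).trans (key b).symm
    · intro v hvA hne'
      rw [connected_iff]
      set c0 : V := if v = u then w else u with hc0
      have hc0A : c0 ∈ A ∧ c0 ≠ v := by
        rcases eq_or_ne v u with rfl | hvu
        · refine ⟨?_, ?_⟩
          · simp only [hc0, if_pos rfl]; exact hwA
          · simp only [hc0, if_pos rfl]; exact hne.symm
        · refine ⟨?_, ?_⟩
          · simp only [hc0, if_neg hvu]; exact huA
          · simp only [hc0, if_neg hvu]; exact hvu.symm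
      have key : ∀ c : ↥(A \ {v}), (G.induce (A \ {v})).Reachable c
          ⟨c0, hc0A.1, hc0A.2⟩ := by
        rintro ⟨c, hcA, hcv⟩
        simp only [Set.mem_singleton_iff] at hcv
        have reachB : ∀ z : V, z ∈ B → z ≠ v → (hz : z ∈ A \ {v}) →
            (G.induce (A \ {v})).Reachable ⟨z, hz⟩ ⟨c0, hc0A.1, hc0A.2⟩ := by
          intro z hzB hzv hz
          have hc0B : c0 ∈ B := by
            rcases eq_or_ne v u with rfl | hvu
            · simp only [hc0, if_pos rfl]; exact hw
            · simp only [hc0, if_neg hvu]; exact hu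
          rcases eq_or_ne z c0 with rfl | hzc0
          · rfl
          · exact (show (G.induce (A \ {v})).Adj ⟨z, hz⟩ ⟨c0, hc0A.1, hc0A.2⟩ from
              hcl hzB hc0B hzc0).reachable
        rcases hcA with hcB | hcsup
        · exact reachB c hcB hcv ⟨Or.inl hcB, hcv⟩
        · rcases path_split_avoid hpG hcsup hcv with ⟨r, hvr, hrsub⟩ | ⟨r, hvr, hrsub⟩
          · -- r : u → c avoiding v ; in particular v ≠ u
            have hvu : u ≠ v := fun h => hvr (h ▸ r.start_mem_support)
            have huAv : u ∈ A \ {v} := ⟨huA, hvu⟩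
            have : (G.induce (A \ {v})).Reachable ⟨u, huAv⟩ ⟨c, Or.inr hcsup, hcv⟩ :=
              induce_reach (A := A \ {v}) r (fun z hz => ⟨hsubA z (hrsub z hz),
                fun hzv => hvr (hzv ▸ hz)⟩) huAv ⟨Or.inr hcsup, hcv⟩
            exact this.symm.trans (reachB u hu hvu huAv)
          · -- r : c → w avoiding v
            have hvw : w ≠ v := fun h => hvr (h ▸ r.end_mem_support)
            have hwAv : w ∈ A \ {v} := ⟨hwA, hvw⟩
            have : (G.induce (A \ {v})).Reachable ⟨c, Or.inr hcsup, hcv⟩ ⟨w, hwAv⟩ :=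
              induce_reach (A := A \ {v}) r (fun z hz => ⟨hsubA z (hrsub z hz),
                fun hzv => hvr (hzv ▸ hz)⟩) ⟨Or.inr hcsup, hcv⟩ hwAv
            exact this.trans (reachB w hw hvw hwAv)
      refine ⟨fun a b => (key a).trans (key b).symm, ⟨⟨c0, hc0A.1, hc0A.2⟩⟩⟩
  -- Maximality forces A = B
  have hAB : A = B := hB.2.2 A Set.subset_union_left
    (le_trans hB.1 (Set.ncard_le_ncard Set.subset_union_left (Set.toFinite _))) hbicA
  -- first edge of p' is an edge of B, contradiction
  have hnil : ¬ p'.Nil := SimpleGraph.Walk.not_nil_of_ne hne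
  have hadj := p'.adj_snd hnil
  have hlen : 1 ≤ p'.length := by
    rcases Nat.eq_zero_or_pos p'.length with h0 | h1
    · exact absurd (SimpleGraph.Walk.nil_iff_length_eq.2 h0) hnil
    · exact h1
  have hy : p'.getVert 1 ∈ p'.support :=
    SimpleGraph.Walk.mem_support_iff_exists_getVert.2 ⟨1, rfl, hlen⟩
  have hyB : p'.getVert 1 ∈ B := by
    have : p'.getVert 1 ∈ A := Or.inr (by rw [hsup]; exact hy)
    rwa [hAB] at this
  rw [deleteEdges_adj] at hadj
  exact hadj.2 (fun x hx => by rcases Sym2.mem_iff.1 hx with rfl | rfl; exacts [hu, hyB])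

end Aux5
section Aux6
variable {V : Type*} [Fintype V] [DecidableEq V] {G : SimpleGraph V}

/-- A suffix of a shortest walk starting at distance ≥ 1 from `u` avoids edges of a
clique containing `u`. -/
lemma shortest_suffix_avoid (hconn : G.Connected) {K : Set V} (hcl : G.IsClique K)
    {u : V} (hu : u ∈ K) {z v : V} (w : G.Walk z v) :
    G.dist u z + w.length = G.dist u v → 1 ≤ G.dist u z →
      ∀ e ∈ w.edges, ¬ (∀ x ∈ e, x ∈ K) := by
  induction w with
  | nil => intro _ _ e he; simp at he
  | @cons z z₁ vv hadj w' ih =>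
    intro hinv h1 e he hallK
    have hd1 : G.dist z z₁ = 1 := dist_eq_one_iff_adj.2 hadj
    have hle : G.dist u z₁ ≤ G.dist u z + 1 := by
      have := hconn.dist_triangle (u := u) (v := z) (w := z₁)
      omega
    have hge : G.dist u vv ≤ G.dist u z₁ + w'.length := by
      have h2 := hconn.dist_triangle (u := u) (v := z₁) (w := vv)
      have h3 := SimpleGraph.dist_le w'
      omega
    have hlen : (SimpleGraph.Walk.cons hadj w').length = w'.length + 1 :=
      SimpleGraph.Walk.length_cons _ _
    have heq : G.dist u z₁ = G.dist u z + 1 := by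
      rw [hlen] at hinv; omega
    rcases List.mem_cons.1 (by simpa using he) with rfl | he'
    · have hzK : z ∈ K := hallK z (Sym2.mem_mk_left _ _)
      have hz₁K : z₁ ∈ K := hallK z₁ (Sym2.mem_mk_right _ _)
      have hzu : z ≠ u := by
        intro h; subst h
        simp [SimpleGraph.dist_self] at h1
      have hz1 : G.dist u z = 1 := by
        have : G.Adj u z := hcl hu hzK (Ne.symm hzu)
        have := dist_eq_one_iff_adj.2 this
        omega
      have : G.dist u z₁ ≤ 1 := by
        rcases eq_or_ne z₁ u with rfl | hne
        · simp [SimpleGraph.dist_self]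
        · exact le_of_eq (dist_eq_one_iff_adj.2 (hcl hu hz₁K hne.symm))
      omega
    · exact ih (by rw [hlen] at hinv; omega) (by omega) e he' hallK

private lemma reach_block_rep_aux {B : Set V} : ∀ {w c : V} (_ : G.Walk w c), c ∈ B →
    ∃ b ∈ B, (G.deleteEdges {e | ∀ x ∈ e, x ∈ B}).Reachable w b := by
  intro w c r
  induction r with
  | nil => intro hc; exact ⟨_, hc, Reachable.refl _⟩
  | @cons a x c hadj r' ih =>
    intro hc
    by_cases hdel : ∀ z ∈ (s(a, x) : Sym2 V), z ∈ B
    · exact ⟨a, hdel a (Sym2.mem_mk_left _ _), Reachable.refl _⟩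
    · obtain ⟨b, hb, hrb⟩ := ih hc
      exact ⟨b, hb, (((deleteEdges_adj (s := {e | ∀ z ∈ e, z ∈ B})).2
        ⟨hadj, hdel⟩).reachable).trans hrb⟩

/-- Every vertex can reach some vertex of `B` after deleting the edges of `B`. -/
lemma reach_block_rep (hconn : G.Connected) {B : Set V} {u0 : V} (hu0 : u0 ∈ B) (w : V) :
    ∃ b ∈ B, (G.deleteEdges {e | ∀ x ∈ e, x ∈ B}).Reachable w b := by
  obtain ⟨r⟩ := hconn.preconnected w u0
  exact reach_block_rep_aux r hu0

/-- A walk from inside a deleted-edges component to outside must pass through `u`. -/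
lemma pass_through {B : Set V} {u : V}
    (hrep : ∀ b, b ∈ B → (G.deleteEdges {e | ∀ x ∈ e, x ∈ B}).Reachable u b → b = u) :
    ∀ {z v' : V} (r : G.Walk z v'),
      ¬ (G.deleteEdges {e | ∀ x ∈ e, x ∈ B}).Reachable u v' →
      (G.deleteEdges {e | ∀ x ∈ e, x ∈ B}).Reachable u z →
      u ∈ r.support := by
  intro z v' r
  induction r with
  | nil => intro hv hz; exact absurd hz hv
  | @cons z z₂ vv hadj r' ih =>
    intro hv hz
    by_cases hdel : ∀ x ∈ (s(z, z₂) : Sym2 V), x ∈ B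
    · have hzB : z ∈ B := hdel z (Sym2.mem_mk_left _ _)
      have : z = u := hrep z hzB hz
      subst this
      exact SimpleGraph.Walk.start_mem_support _
    · have hz₂ : (G.deleteEdges {e | ∀ x ∈ e, x ∈ B}).Reachable u z₂ :=
        hz.trans ((deleteEdges_adj (s := {e | ∀ x ∈ e, x ∈ B})).2 ⟨hadj, hdel⟩).reachable
      exact List.mem_cons_of_mem _ (ih hv hz₂)

end Aux6
section Main
variable {V : Type*} [Fintype V] [DecidableEq V]

lemma upper_bound (G : SimpleGraph V) (hbg : IsBlockGraph G) (t : ℕ) (Bl : Fin t → Set V)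
    (hB : ∀ i, IsBlock G (Bl i)) (hinj : Function.Injective Bl)
    (hall : ∀ C : Set V, IsBlock G C → ∃ i, C = Bl i)
    (f : V → Fin t → ℕ)
    (hdistinct : ∀ i, Set.InjOn (fun v => f v i) (Bl i))
    (hcomp : ∀ i : Fin t, ∀ u w : V,
      (G.deleteEdges {e | ∀ x ∈ e, x ∈ Bl i}).Reachable u w → f u i = f w i) :
    ∀ (n : ℕ) (S : Finset V), S.Nonempty →
      (∑ i : Fin t, (S.image (fun v => f v i)).card) = n →
    ∃ H : G.Subgraph, H.Connected ∧ ↑S ⊆ H.verts ∧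
      H.edgeSet.ncard + t ≤ ∑ i : Fin t, (S.image (fun v => f v i)).card := by
  intro n
  induction n using Nat.strong_induction_on with
  | _ n IH =>
  intro S hSne hn
  by_cases hcard : S.card ≤ 1
  · obtain ⟨x, rfl⟩ := Finset.card_eq_one.1 (le_antisymm hcard hSne.card_pos)
    refine ⟨G.singletonSubgraph x, SimpleGraph.Subgraph.singletonSubgraph_connected, ?_, ?_⟩
    · simp [SimpleGraph.singletonSubgraph_verts]
    · have himg : ∀ i : Fin t, (({x} : Finset V).image (fun v => f v i)).card = 1 := by
        intro i; simp
      rw [Finset.sum_congr rfl (fun i _ => himg i), Finset.sum_const, Finset.card_univ,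
        Fintype.card_fin, smul_eq_mul, mul_one]
      simp [SimpleGraph.edgeSet_singletonSubgraph]
  · push_neg at hcard
    obtain ⟨x, hx, y, hy, hxy⟩ := Finset.one_lt_card.1 hcard
    obtain ⟨⟨u, v⟩, hpr, hmax0⟩ := Finset.exists_max_image (S ×ˢ S)
      (fun p => G.dist p.1 p.2) ⟨(x, y), Finset.mem_product.2 ⟨hx, hy⟩⟩
    have hu : u ∈ S := (Finset.mem_product.1 hpr).1
    have hv : v ∈ S := (Finset.mem_product.1 hpr).2
    have hmax : ∀ w' ∈ S, ∀ v' ∈ S, G.dist w' v' ≤ G.dist u v := fun w' hw' v' hv' =>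
      hmax0 (w', v') (Finset.mem_product.2 ⟨hw', hv'⟩)
    have hdxy : G.dist x y ≠ 0 :=
      dist_ne_zero_iff_ne_and_reachable.2 ⟨hxy, hbg.1.preconnected x y⟩
    have hduv_pos : 1 ≤ G.dist u v := by
      have := hmax x hx y hy; omega
    have hne : u ≠ v := by
      rintro rfl; rw [SimpleGraph.dist_self] at hduv_pos; omega
    obtain ⟨p, hplen⟩ := (hbg.1.preconnected u v).exists_walk_length_eq_dist
    cases p with
    | nil => rw [SimpleGraph.Walk.length_nil] at hplen; omega
    | @cons _ a _ hadj q =>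
    rw [SimpleGraph.Walk.length_cons] at hplen
    -- the block containing edge u-a
    have hpairclique : G.IsClique {u, a} := by
      rintro z (rfl | rfl) z' (rfl | rfl) hzz'
      · exact absurd rfl hzz'
      · exact hadj
      · exact hadj.symm
      · exact absurd rfl hzz'
    have hpairbic : IsBiconnectedSet G {u, a} := bic_of_clique hpairclique ⟨u, by simp⟩
    obtain ⟨C, hCblock, hCsub⟩ := exists_block_superset hpairbic
      (by rw [Set.ncard_pair hadj.ne])
    obtain ⟨i, hCi⟩ := hall C hCblock
    have huBl : u ∈ Bl i := hCi ▸ hCsub (by simp)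
    have haBl : a ∈ Bl i := hCi ▸ hCsub (by simp)
    have hclBl : ∀ j, G.IsClique (Bl j) := fun j => hbg.2 _ (hB j)
    have hda : G.dist u a = 1 := dist_eq_one_iff_adj.2 hadj
    -- fact (1): f a i = f v i
    have hq_avoid : ∀ e ∈ q.edges, ¬ (∀ x ∈ e, x ∈ Bl i) :=
      shortest_suffix_avoid hbg.1 (hclBl i) huBl q (by omega) (by omega)
    have hfa_v : f a i = f v i :=
      hcomp i a v ⟨q.toDeleteEdges _ (fun e he => hq_avoid e he)⟩
    have hfau : f a i ≠ f u i := (hdistinct i).ne haBl huBl hadj.ne'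
    -- fact (2): coordinates other than i do not change along u-a
    have hstep2 : ∀ j, j ≠ i → f u j = f a j := by
      intro j hj
      have hnotboth : ¬ (∀ x ∈ (s(u, a) : Sym2 V), x ∈ Bl j) := by
        intro hboth
        have huj : u ∈ Bl j := hboth u (Sym2.mem_mk_left _ _)
        have haj : a ∈ Bl j := hboth a (Sym2.mem_mk_right _ _)
        exact hj (hinj (block_eq_of_two_shared (hB j) (hB i) (hclBl j) (hclBl i)
          ⟨huj, huBl⟩ ⟨haj, haBl⟩ hadj.ne))
      exact hcomp j u a
        ((deleteEdges_adj (s := {e | ∀ x ∈ e, x ∈ Bl j})).2 ⟨hadj, hnotboth⟩).reachable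
    -- fact (3): no other vertex of S shares u's i-th coordinate
    have hrep : ∀ b, b ∈ Bl i →
        (G.deleteEdges {e | ∀ x ∈ e, x ∈ Bl i}).Reachable u b → b = u := by
      intro b hb hr
      exact (hdistinct i) hb huBl (by simpa using (hcomp i u b hr).symm)
    have hvnotreach : ¬ (G.deleteEdges {e | ∀ x ∈ e, x ∈ Bl i}).Reachable u v := by
      intro hr
      have h1 : f u i = f v i := hcomp i u v hr
      rw [← hfa_v] at h1
      exact hfau h1.symm
    have hstep3 : ∀ w ∈ S, f w i = f u i → w = u := by
      intro w hw hfw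
      by_contra hwu
      obtain ⟨b, hb, hrb⟩ := reach_block_rep hbg.1 huBl w
      have hfb : f b i = f u i := by rw [← hcomp i w b hrb]; exact hfw
      have hbu : b = u := (hdistinct i) hb huBl hfb
      subst hbu
      obtain ⟨r, hrlen⟩ := (hbg.1.preconnected w v).exists_walk_length_eq_dist
      have humem : b ∈ r.support := pass_through hrep r hvnotreach hrb.symm
      have hsplit : (r.takeUntil b humem).length + (r.dropUntil b humem).length
          = r.length := by
        rw [← SimpleGraph.Walk.length_append, r.take_spec humem]
      have h1 := SimpleGraph.dist_le (r.takeUntil b humem)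
      have h2 := SimpleGraph.dist_le (r.dropUntil b humem)
      have hmax' := hmax w hw v hv
      have hwu0 : G.dist w b = 0 := by omega
      exact dist_ne_zero_iff_ne_and_reachable.2 ⟨hwu, hbg.1.preconnected w b⟩ hwu0
    -- the new finset
    set S' : Finset V := insert a (S.erase u) with hS'
    have haS' : a ∈ S' := Finset.mem_insert_self _ _
    have hS'ne : S'.Nonempty := ⟨a, haS'⟩
    have him_ne : ∀ j, j ≠ i →
        (S'.image (fun z => f z j)) ⊆ (S.image (fun z => f z j)) := by
      intro j hj c hc
      obtain ⟨z, hz, rfl⟩ := Finset.mem_image.1 hc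
      rcases Finset.mem_insert.1 hz with rfl | hz'
      · exact Finset.mem_image.2 ⟨u, hu, hstep2 j hj⟩
      · exact Finset.mem_image.2 ⟨z, Finset.mem_of_mem_erase hz', rfl⟩
    have him_i : (S'.image (fun z => f z i))
        ⊆ (S.image (fun z => f z i)).erase (f u i) := by
      intro c hc
      obtain ⟨z, hz, rfl⟩ := Finset.mem_image.1 hc
      rcases Finset.mem_insert.1 hz with rfl | hz'
      · exact Finset.mem_erase.2 ⟨hfau, Finset.mem_image.2 ⟨v, hv, hfa_v.symm⟩⟩
      · refine Finset.mem_erase.2 ⟨?_, Finset.mem_image.2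
          ⟨z, Finset.mem_of_mem_erase hz', rfl⟩⟩
        intro heq
        exact (Finset.ne_of_mem_erase hz')
          (hstep3 z (Finset.mem_of_mem_erase hz') heq)
    have hfui_mem : f u i ∈ S.image (fun z => f z i) := Finset.mem_image.2 ⟨u, hu, rfl⟩
    have hcard_i : (S'.image (fun z => f z i)).card
        < (S.image (fun z => f z i)).card := by
      have hle := Finset.card_le_card him_i
      rw [Finset.card_erase_of_mem hfui_mem] at hle
      have hpos : 0 < (S.image (fun z => f z i)).card :=
        Finset.card_pos.2 ⟨f u i, hfui_mem⟩
      omega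
    have hsum_lt : (∑ j, (S'.image (fun z => f z j)).card)
        < ∑ j, (S.image (fun z => f z j)).card := by
      apply Finset.sum_lt_sum
      · intro j _
        rcases eq_or_ne j i with rfl | hj
        · exact hcard_i.le
        · exact Finset.card_le_card (him_ne j hj)
      · exact ⟨i, Finset.mem_univ i, hcard_i⟩
    obtain ⟨H', hH'conn, hH'sub, hH'card⟩ := IH _ (by omega) S' hS'ne rfl
    refine ⟨H' ⊔ G.subgraphOfAdj hadj, ?_, ?_, ?_⟩
    · refine SimpleGraph.Subgraph.connected_sup hH'conn.preconnected
        (SimpleGraph.Subgraph.subgraphOfAdj_connected hadj).preconnected ⟨a, ?_⟩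
      rw [SimpleGraph.Subgraph.verts_inf]
      exact ⟨hH'sub haS', by simp⟩
    · intro z hz
      rw [SimpleGraph.Subgraph.verts_sup]
      rcases eq_or_ne z u with rfl | hzu
      · exact Or.inr (by simp)
      · exact Or.inl (hH'sub (Finset.mem_coe.2 (Finset.mem_insert_of_mem
          (Finset.mem_erase.2 ⟨hzu, Finset.mem_coe.1 hz⟩))))
    · have hedge : (H' ⊔ G.subgraphOfAdj hadj).edgeSet = H'.edgeSet ∪ {s(u, a)} := by
        rw [SimpleGraph.Subgraph.edgeSet_sup, SimpleGraph.edgeSet_subgraphOfAdj]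
      rw [hedge]
      have h1 : (H'.edgeSet ∪ {s(u, a)}).ncard ≤ H'.edgeSet.ncard + 1 := by
        have h2 := Set.ncard_union_le H'.edgeSet {s(u, a)}
        simpa using h2
      omega

end Main
/-- For a block graph labelled by Hamming coordinates indexed by its blocks
(vertices of a block get pairwise distinct i-th coordinates, and the i-th coordinate is
constant on components of G minus the edges of block i), the Steiner distance of a set
S of at least two vertices satisfies d(S) = (sum_i l_i(S)) - t, where l_i(S) is the
number of distinct i-th coordinates on S. -/
theorem stmt3 {V : Type*} [Fintype V] [DecidableEq V] (G : SimpleGraph V)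
    (hbg : IsBlockGraph G) (t : ℕ) (Bl : Fin t → Set V)
    (hB : ∀ i, IsBlock G (Bl i)) (hinj : Function.Injective Bl)
    (hall : ∀ C : Set V, IsBlock G C → ∃ i, C = Bl i)
    (f : V → Fin t → ℕ)
    (hdistinct : ∀ i, Set.InjOn (fun v => f v i) (Bl i))
    (hcomp : ∀ i : Fin t, ∀ u w : V,
      (G.deleteEdges {e | ∀ x ∈ e, x ∈ Bl i}).Reachable u w → f u i = f w i)
    (S : Finset V) (hS : 2 ≤ S.card) :
    steinerDist G ↑S + t = ∑ i : Fin t, (S.image (fun v => f v i)).card := by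
  classical
  have hSne : S.Nonempty := Finset.card_pos.1 (by omega)
  set M : Set ℕ := {m | ∃ H : G.Subgraph, H.Connected ∧ ↑S ⊆ H.verts ∧
    H.edgeSet.ncard = m} with hM
  have hclBl : ∀ j, G.IsClique (Bl j) := fun j => hbg.2 _ (hB j)
  -- lower bound
  have hlower : ∀ m ∈ M, (∑ i : Fin t, (S.image (fun v => f v i)).card) ≤ m + t := by
    rintro m ⟨H, hHconn, hHsub, rfl⟩
    have hper : ∀ i : Fin t, (S.image (fun v => f v i)).card ≤
        (H.edgeSet ∩ {e | ∀ x ∈ e, x ∈ Bl i}).ncard + 1 := by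
      intro i
      have hch : ∀ x y : V, H.Adj x y → ¬(x ∈ Bl i ∧ y ∈ Bl i) →
          (fun v => f v i) x = (fun v => f v i) y := by
        intro x y hxy hnot
        refine hcomp i x y ((deleteEdges_adj (s := {e | ∀ z ∈ e, z ∈ Bl i})).2
          ⟨H.adj_sub hxy, ?_⟩).reachable
        intro hel
        exact hnot ⟨hel x (Sym2.mem_mk_left _ _), hel y (Sym2.mem_mk_right _ _)⟩
      have hcb := change_bound H hHconn (Bl i) (fun v => f v i) hch
      have hsubim : ↑(S.image (fun v => f v i)) ⊆ (fun v => f v i) '' H.verts := by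
        rw [Finset.coe_image]; exact Set.image_mono hHsub
      have hcard := Set.ncard_le_ncard hsubim (Set.toFinite _)
      rw [Set.ncard_coe_finset] at hcard
      omega
    set A : Fin t → Finset (Sym2 V) := fun i =>
      (H.edgeSet ∩ {e | ∀ x ∈ e, x ∈ Bl i}).toFinite.toFinset with hA
    have hAcard : ∀ i, (A i).card = (H.edgeSet ∩ {e | ∀ x ∈ e, x ∈ Bl i}).ncard := by
      intro i
      rw [hA]
      exact (Set.ncard_eq_toFinset_card _ _).symm
    have hdisj : ∀ i ∈ (Finset.univ : Finset (Fin t)), ∀ j ∈ Finset.univ, i ≠ j →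
        Disjoint (A i) (A j) := by
      intro i _ j _ hij
      rw [Finset.disjoint_left]
      intro e hei hej
      rw [hA, Set.Finite.mem_toFinset] at hei hej
      induction e with
      | _ x y =>
        have hadj : H.Adj x y := SimpleGraph.Subgraph.mem_edgeSet.1 hei.1
        have hxy : x ≠ y := (H.adj_sub hadj).ne
        have hxi : x ∈ Bl i := hei.2 x (Sym2.mem_mk_left _ _)
        have hyi : y ∈ Bl i := hei.2 y (Sym2.mem_mk_right _ _)
        have hxj : x ∈ Bl j := hej.2 x (Sym2.mem_mk_left _ _)
        have hyj : y ∈ Bl j := hej.2 y (Sym2.mem_mk_right _ _)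
        exact hij (hinj (block_eq_of_two_shared (hB i) (hB j) (hclBl i) (hclBl j)
          ⟨hxi, hxj⟩ ⟨hyi, hyj⟩ hxy))
    have hsum_eq : (∑ i : Fin t, (A i).card) = (Finset.univ.biUnion A).card :=
      (Finset.card_biUnion hdisj).symm
    have hsub2 : Finset.univ.biUnion A ⊆ H.edgeSet.toFinite.toFinset := by
      intro e he
      obtain ⟨i, _, hei⟩ := Finset.mem_biUnion.1 he
      rw [hA, Set.Finite.mem_toFinset] at hei
      rw [Set.Finite.mem_toFinset]
      exact hei.1
    have hsum_le : (∑ i : Fin t, (A i).card) ≤ H.edgeSet.ncard := by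
      rw [hsum_eq, Set.ncard_eq_toFinset_card _ H.edgeSet.toFinite]
      exact Finset.card_le_card hsub2
    calc (∑ i : Fin t, (S.image (fun v => f v i)).card)
        ≤ ∑ i : Fin t, ((H.edgeSet ∩ {e | ∀ x ∈ e, x ∈ Bl i}).ncard + 1) :=
          Finset.sum_le_sum (fun i _ => hper i)
      _ = (∑ i : Fin t, (A i).card) + t := by
          rw [Finset.sum_add_distrib]
          simp [hAcard]
      _ ≤ H.edgeSet.ncard + t := by omega
  -- upper bound
  obtain ⟨H0, hH0conn, hH0sub, hH0card⟩ :=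
    upper_bound G hbg t Bl hB hinj hall f hdistinct hcomp _ S hSne rfl
  have hm0 : H0.edgeSet.ncard ∈ M := ⟨H0, hH0conn, hH0sub, rfl⟩
  have hMne : M.Nonempty := ⟨_, hm0⟩
  have hsinf_mem : sInf M ∈ M := Nat.sInf_mem hMne
  have h1 := hlower _ hsinf_mem
  have h2 : sInf M ≤ H0.edgeSet.ncard := Nat.sInf_le hm0
  have hsd : steinerDist G ↑S = sInf M := rfl
  omega
end

section
/- Let G be a connected block graph. Then the Wiener index of G equals ∑_{ab ∈ E(G)} N_{ab} · N_{ba}, where N_{ab} is the number of vertices strictly closer to a than to b, and N_{ba} the number strictly closer to b than to a. -/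
open SimpleGraph Finset
open scoped Classical

namespace BlockGraphProofAux

variable {V : Type*} {G : SimpleGraph V}

lemma reach_induce {T : Set V} : ∀ {a b : V} (w : G.Walk a b) (hs : ∀ x ∈ w.support, x ∈ T),
    (G.induce T).Reachable ⟨a, hs a w.start_mem_support⟩ ⟨b, hs b w.end_mem_support⟩ := by
  intro a b w
  induction w with
  | nil => intro hs; rfl
  | cons h p ih =>
    intro hs
    have hs' : ∀ x ∈ p.support, x ∈ T := fun x hx => hs x (by simp [hx])
    refine Reachable.trans ?_ (ih hs')
    exact SimpleGraph.Adj.reachable (by simpa using h)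

lemma not_mem_takeUntil_support {w v b : V} {q : G.Walk w v} (hq : q.IsPath)
    (hb : b ∈ q.support) (hbv : b ≠ v) : v ∉ (q.takeUntil b hb).support := by
  classical
  intro hv
  have hspec := q.take_spec hb
  have hnd : q.support.Nodup := hq.support_nodup
  rw [← hspec, Walk.support_append] at hnd
  have hdisj := List.disjoint_of_nodup_append hnd
  have hv2 : v ∈ (q.dropUntil b hb).support.tail := by
    have : v ∈ (q.dropUntil b hb).support := Walk.end_mem_support _
    rw [Walk.support_eq_cons, List.mem_cons] at this
    rcases this with h | h
    · exact absurd h.symm hbv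
    · exact h
  exact hdisj hv hv2

lemma loop_start_mem_tail {x : V} (c : G.Walk x x) (h : ¬c.Nil) : x ∈ c.support.tail := by
  cases c with
  | nil => simp at h
  | cons h p => simpa using p.end_mem_support

lemma mem_support_loop_iff_tail {x y : V} (c : G.Walk x x) (h : ¬c.Nil) :
    y ∈ c.support ↔ y ∈ c.support.tail := by
  constructor
  · intro hy
    rw [Walk.support_eq_cons, List.mem_cons] at hy
    rcases hy with rfl | hy
    · exact loop_start_mem_tail c h
    · exact hy
  · intro hy
    rw [Walk.support_eq_cons, List.mem_cons]
    exact Or.inr hy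

lemma cycle_support_biconnected {x : V} {c : G.Walk x x} (hc : c.IsCycle) :
    IsBiconnectedSet G {v | v ∈ c.support} := by
  classical
  constructor
  · rw [connected_iff]
    refine ⟨?_, ⟨⟨x, c.start_mem_support⟩⟩⟩
    rintro ⟨a, ha⟩ ⟨b, hb⟩
    have ha' : a ∈ c.support := ha
    have hb' : b ∈ c.support := hb
    set W : G.Walk a b := (c.takeUntil a ha').reverse.append (c.takeUntil b hb') with hW
    have hs : ∀ y ∈ W.support, y ∈ {v | v ∈ c.support} := by
      intro y hy
      rw [hW, Walk.mem_support_append_iff, Walk.support_reverse, List.mem_reverse] at hy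
      rcases hy with hy | hy
      · exact c.support_takeUntil_subset ha' hy
      · exact c.support_takeUntil_subset hb' hy
    exact reach_induce W hs
  · intro v hv hne
    have hv' : v ∈ c.support := hv
    have hrot := hc.rotate hv'
    have hmem : ∀ y, y ∈ c.support ↔ y ∈ (c.rotate v hv').support := by
      intro y
      rw [mem_support_loop_iff_tail c hc.not_nil,
        mem_support_loop_iff_tail _ hrot.not_nil]
      exact ((c.support_rotate v hv').mem_iff).symm
    rcases hrotc : c.rotate v hv' with _ | ⟨hadj, q⟩
    · rw [hrotc] at hrot; exact absurd rfl hrot.ne_nil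
    · rename_i w'
      rw [hrotc] at hrot hmem
      have hq : q.IsPath := ((Walk.cons_isCycle_iff q hadj).mp hrot).1
      rw [connected_iff]
      obtain ⟨y0, hy0⟩ := hne
      constructor
      · rintro ⟨a, ha⟩ ⟨b, hb⟩
        obtain ⟨ha1, ha2⟩ := ha
        obtain ⟨hb1, hb2⟩ := hb
        have ha2' : a ≠ v := ha2
        have hb2' : b ≠ v := hb2
        have haq : a ∈ q.support := by
          have := (hmem a).mp ha1
          simp only [Walk.support_cons, List.mem_cons] at this
          rcases this with rfl | h
          · exact absurd rfl ha2'
          · exact h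
        have hbq : b ∈ q.support := by
          have := (hmem b).mp hb1
          simp only [Walk.support_cons, List.mem_cons] at this
          rcases this with rfl | h
          · exact absurd rfl hb2'
          · exact h
        set W : G.Walk a b := (q.takeUntil a haq).reverse.append (q.takeUntil b hbq) with hW
        have hs : ∀ y ∈ W.support, y ∈ {z | z ∈ c.support} \ {v} := by
          intro y hy
          rw [hW, Walk.mem_support_append_iff, Walk.support_reverse, List.mem_reverse] at hy
          have hyq : y ∈ q.support ∧ y ≠ v := by
            rcases hy with hy | hy
            · refine ⟨q.support_takeUntil_subset haq hy, ?_⟩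
              rintro rfl
              exact not_mem_takeUntil_support hq haq ha2' hy
            · refine ⟨q.support_takeUntil_subset hbq hy, ?_⟩
              rintro rfl
              exact not_mem_takeUntil_support hq hbq hb2' hy
          refine ⟨(hmem y).mpr ?_, hyq.2⟩
          simp [hyq.1]
        exact reach_induce W hs
      · exact ⟨⟨y0, hy0⟩⟩

lemma biconnected_isClique [Fintype V] (hbg : IsBlockGraph G) {S : Set V}
    (hS : IsBiconnectedSet G S) (h2 : 2 ≤ S.ncard) : G.IsClique S := by
  classical
  set C : Finset (Finset V) :=
    Finset.univ.filter (fun B : Finset V => S ⊆ ↑B ∧ IsBiconnectedSet G ↑B) with hC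
  have hSC : S.toFinset ∈ C := by
    simp only [hC, Finset.mem_filter, Finset.mem_univ, true_and, Set.coe_toFinset]
    exact ⟨le_refl _, hS⟩
  obtain ⟨B, hBC, hBmax⟩ := C.exists_max_image (fun B => B.card) ⟨_, hSC⟩
  simp only [hC, Finset.mem_filter, Finset.mem_univ, true_and] at hBC
  obtain ⟨hSB, hBbi⟩ := hBC
  have hblock : IsBlock G (↑B : Set V) := by
    refine ⟨le_trans h2 ?_, hBbi, ?_⟩
    · exact Set.ncard_le_ncard hSB (Set.toFinite _)
    · intro B' hBB' h2' hbi'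
      have hB'C : B'.toFinset ∈ C := by
        simp only [hC, Finset.mem_filter, Finset.mem_univ, true_and, Set.coe_toFinset]
        exact ⟨hSB.trans hBB', hbi'⟩
      have hcard := hBmax _ hB'C
      have hsub : B ⊆ B'.toFinset := by
        intro y hy
        rw [Set.mem_toFinset]
        exact hBB' hy
      have heq := Finset.eq_of_subset_of_card_le hsub hcard
      rw [heq, Set.coe_toFinset]
  exact (hbg.2 _ hblock).subset hSB

lemma cycle_support_isClique [Fintype V] (hbg : IsBlockGraph G) {x : V} {c : G.Walk x x}
    (hc : c.IsCycle) : G.IsClique {v | v ∈ c.support} := by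
  classical
  apply biconnected_isClique hbg (cycle_support_biconnected hc)
  have h3 := hc.three_le_length
  rcases c with _ | ⟨hadj, p⟩
  · simp at h3
  · rename_i w
    have hxw : x ≠ w := hadj.ne
    have : ({x, w} : Set V).ncard ≤ ({v | v ∈ (Walk.cons hadj p).support} : Set V).ncard := by
      apply Set.ncard_le_ncard _ (Set.toFinite _)
      intro y hy
      rcases hy with rfl | hy
      · exact Walk.start_mem_support _
      · simp only [Set.mem_singleton_iff] at hy
        subst hy
        simp
    refine le_trans ?_ this
    rw [Set.ncard_pair hxw]

/-- If `a ~ b` and there is a walk from `a` to `b` avoiding the edge `ab`, then there is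
a vertex `x` on the walk, distinct from `a, b`, adjacent to both. -/
lemma exists_internal_vertex [Fintype V] (hbg : IsBlockGraph G) {a b : V} (hab : G.Adj a b)
    (w : G.Walk a b) (he : s(a, b) ∉ w.edges) :
    ∃ x, x ∈ w.support ∧ x ≠ a ∧ x ≠ b ∧ G.Adj x a ∧ G.Adj x b := by
  classical
  set p := w.bypass with hp
  have hpath : p.IsPath := w.bypass_isPath
  have hpe : s(a, b) ∉ p.edges := fun h => he (w.edges_bypass_subset h)
  have hps : p.support ⊆ w.support := w.support_bypass_subset
  have hcyc : (Walk.cons hab.symm p).IsCycle := by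
    rw [Walk.cons_isCycle_iff]
    refine ⟨hpath, ?_⟩
    rwa [Sym2.eq_swap]
  have hclique := cycle_support_isClique hbg hcyc
  rcases hq : p with _ | ⟨hac, q⟩
  · exact absurd rfl hab.ne
  · rename_i c
    rw [hq] at hpath hpe hps
    have hcb : c ∈ p.support := by rw [hq]; simp
    have hca : c ≠ a := hac.ne.symm
    have hcbne : c ≠ b := by
      rintro rfl
      have : q = Walk.nil := (Walk.isPath_iff_eq_nil (p := q)).mp hpath.of_cons
      rw [this] at hpe
      simp at hpe
    refine ⟨c, hps (by simp), hca, hcbne, hac.symm, ?_⟩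
    have hcs : c ∈ (Walk.cons hab.symm p).support := by rw [hq]; simp
    have hbs : b ∈ (Walk.cons hab.symm p).support := Walk.start_mem_support _
    exact hclique hcs hbs hcbne

lemma walk_split_dist (hc : G.Connected) {u v x : V} (w : G.Walk u v)
    (hw : w.length = G.dist u v) (hx : x ∈ w.support) :
    G.dist u x + G.dist x v = G.dist u v := by
  obtain ⟨q, r, rfl⟩ := Walk.mem_support_iff_exists_append.mp hx
  have h1 : G.dist u x ≤ q.length := G.dist_le q
  have h2 : G.dist x v ≤ r.length := G.dist_le r
  have h3 : G.dist u v ≤ G.dist u x + G.dist x v := hc.dist_triangle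
  rw [Walk.length_append] at hw
  omega

lemma adj_dist_le (h : G.Adj a b) (hc : G.Connected) (w : V) :
    G.dist w a ≤ G.dist w b + 1 := by
  have h1 : G.dist w a ≤ G.dist w b + G.dist b a := hc.dist_triangle
  have h2 : G.dist b a ≤ (Walk.cons h.symm Walk.nil).length := G.dist_le _
  simp only [Walk.length_cons, Walk.length_nil] at h2
  omega

lemma exists_gate (hc : G.Connected) {u y : V} {k : ℕ} (h : G.dist u y = k + 1) :
    ∃ g, G.Adj g y ∧ G.dist u g = k := by
  obtain ⟨w, hw⟩ := hc.exists_walk_length_eq_dist u y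
  rw [h] at hw
  refine ⟨w.getVert k, ?_, ?_⟩
  · have := w.adj_getVert_succ (by omega : k < w.length)
    rw [show k + 1 = w.length by omega, w.getVert_length] at this
    exact this
  · have hmem : w.getVert k ∈ w.support :=
      Walk.mem_support_iff_exists_getVert.mpr ⟨k, rfl, by omega⟩
    have hsplit := walk_split_dist hc w (by omega) hmem
    have hne : w.getVert k ≠ y := by
      have := w.adj_getVert_succ (by omega : k < w.length)
      rw [show k + 1 = w.length by omega, w.getVert_length] at this
      exact this.ne
    have hpos : 0 < G.dist (w.getVert k) y := hc.pos_dist_of_ne hne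
    have hle : G.dist u y ≤ G.dist u (w.getVert k) + 1 := by
      have hadj : G.Adj (w.getVert k) y := by
        have := w.adj_getVert_succ (by omega : k < w.length)
        rwa [show k + 1 = w.length by omega, w.getVert_length] at this
      have := adj_dist_le hadj.symm hc u
      omega
    omega

lemma four_cycle_adj [Fintype V] (hbg : IsBlockGraph G) {g a b x : V}
    (h1 : G.Adj g a) (h2 : G.Adj a b) (h3 : G.Adj b x) (h4 : G.Adj x g)
    (hgb : g ≠ b) (hax : a ≠ x) : G.Adj g b := by
  classical
  set q : G.Walk a g := Walk.cons h2 (Walk.cons h3 (Walk.cons h4 Walk.nil)) with hq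
  have ne1 : g ≠ a := h1.ne
  have ne2 : a ≠ b := h2.ne
  have ne3 : b ≠ x := h3.ne
  have ne4 : x ≠ g := h4.ne
  have hqpath : q.IsPath := by
    rw [Walk.isPath_def, hq]
    simp [ne1.symm, ne2, ne3, ne4, hgb, hax, Ne.symm hgb, Ne.symm hax, ne1, ne4.symm]
  have hcyc : (Walk.cons h1 q).IsCycle := by
    rw [Walk.cons_isCycle_iff]
    refine ⟨hqpath, ?_⟩
    rw [hq]
    simp [Sym2.eq_iff, ne1, ne2, ne3, ne4, hgb, hax, Ne.symm hgb, Ne.symm hax, ne1.symm, ne4.symm]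
  have hclique := cycle_support_isClique hbg hcyc
  have hgs : g ∈ (Walk.cons h1 q).support := Walk.start_mem_support _
  have hbs : b ∈ (Walk.cons h1 q).support := by rw [hq]; simp
  exact hclique hgs hbs hgb

/-- In a block graph, two adjacent vertices equidistant from `u` have a common neighbor
one step closer to `u`. -/
lemma common_gate [Fintype V] (hbg : IsBlockGraph G) {u x a : V} {m : ℕ}
    (hadj : G.Adj x a) (hx : G.dist u x = m) (ha : G.dist u a = m) (hm : 1 ≤ m) :
    ∃ g, G.Adj g x ∧ G.Adj g a ∧ G.dist u g + 1 = m := by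
  classical
  have hc := hbg.1
  obtain ⟨p, hp⟩ := hc.exists_walk_length_eq_dist x u
  obtain ⟨q, hq⟩ := hc.exists_walk_length_eq_dist u a
  have hpx : G.dist x u = m := by rw [dist_comm]; exact hx
  set w : G.Walk x a := p.append q with hw
  have hedge : s(x, a) ∉ w.edges := by
    rw [hw, Walk.edges_append, List.mem_append]
    rintro (h | h)
    · have ha' : a ∈ p.support := Walk.snd_mem_support_of_mem_edges p h
      have hsp := walk_split_dist hc p hp ha'
      have hxa : 1 ≤ G.dist x a := hc.pos_dist_of_ne hadj.ne
      have hau : G.dist a u = G.dist u a := dist_comm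
      omega
    · have hx' : x ∈ q.support := Walk.fst_mem_support_of_mem_edges q h
      have hsq := walk_split_dist hc q hq hx'
      have hxa : 1 ≤ G.dist x a := hc.pos_dist_of_ne hadj.ne
      have hxu : G.dist x a = G.dist a x := dist_comm
      have h2 : G.dist x u ≤ G.dist x a + G.dist a u := by
        have := hc.dist_triangle (u := x) (v := a) (w := u)
        exact this
      have hau : G.dist a u = G.dist u a := dist_comm
      omega
  obtain ⟨y, hys, hyx, hya, hadjyx, hadjya⟩ := exists_internal_vertex hbg hadj w hedge
  rw [hw, Walk.mem_support_append_iff] at hys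
  rcases hys with hyp | hyq
  · have hsp := walk_split_dist hc p hp hyp
    have h1 : 1 ≤ G.dist x y := hc.pos_dist_of_ne (Ne.symm hyx)
    have h2 : G.dist u a ≤ G.dist u y + 1 := adj_dist_le hadjya.symm hc u
    have h3 : G.dist y u = G.dist u y := dist_comm
    exact ⟨y, hadjyx, hadjya, by omega⟩
  · have hsq := walk_split_dist hc q hq hyq
    have h1 : 1 ≤ G.dist y a := hc.pos_dist_of_ne hya
    have h2 : G.dist u x ≤ G.dist u y + 1 := adj_dist_le hadjyx.symm hc u
    exact ⟨y, hadjyx, hadjya, by omega⟩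

/-- In a block graph, the neighbor of `x` one step closer to `u` is unique. -/
lemma unique_gate [Fintype V] (hbg : IsBlockGraph G) {u x y z : V} {k : ℕ}
    (hx : G.dist u x = k + 1) (hyx : G.Adj y x) (hzx : G.Adj z x)
    (hy : G.dist u y = k) (hz : G.dist u z = k) : y = z := by
  classical
  have hc := hbg.1
  rcases Nat.eq_zero_or_pos k with rfl | hk
  · rw [hc.dist_eq_zero_iff] at hy hz
    exact hy.symm.trans hz
  by_contra hne
  obtain ⟨p, hp⟩ := hc.exists_walk_length_eq_dist y u
  obtain ⟨q, hq⟩ := hc.exists_walk_length_eq_dist u z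
  have hyu : G.dist y u = k := by rw [SimpleGraph.dist_comm]; exact hy
  set w : G.Walk y x := p.append (q.append (Walk.cons hzx Walk.nil)) with hw
  have hedge : s(y, x) ∉ w.edges := by
    rw [hw]
    simp only [Walk.edges_append, Walk.edges_cons, Walk.edges_nil, List.mem_append,
      List.mem_cons, List.not_mem_nil, or_false]
    rintro (h | h | h)
    · have hx' : x ∈ p.support := Walk.snd_mem_support_of_mem_edges p h
      have hsp := walk_split_dist hc p hp hx'
      have h2 : G.dist x u = G.dist u x := SimpleGraph.dist_comm
      omega
    · have hx' : x ∈ q.support := Walk.snd_mem_support_of_mem_edges q h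
      have hsq := walk_split_dist hc q hq hx'
      omega
    · rw [Sym2.eq_iff] at h
      rcases h with ⟨h1, -⟩ | ⟨h1, -⟩
      · exact hne h1
      · exact hyx.ne h1
  obtain ⟨t, hts, hty, htx, hadjty, hadjtx⟩ := exists_internal_vertex hbg hyx w hedge
  rw [hw, Walk.mem_support_append_iff, Walk.mem_support_append_iff] at hts
  simp only [Walk.support_cons, Walk.support_nil, List.mem_cons, List.mem_singleton,
    List.not_mem_nil, or_false] at hts
  have htz : t = z := by
    rcases hts with hta | htb | rfl | rfl
    · exfalso
      have hsp := walk_split_dist hc p hp hta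
      have h1 : 1 ≤ G.dist y t := hc.pos_dist_of_ne (Ne.symm hty)
      have h2 : G.dist u x ≤ G.dist u t + 1 := adj_dist_le hadjtx.symm hc u
      have h3 : G.dist t u = G.dist u t := SimpleGraph.dist_comm
      omega
    · have hsq := walk_split_dist hc q hq htb
      have h2 : G.dist u x ≤ G.dist u t + 1 := adj_dist_le hadjtx.symm hc u
      have h4 : G.dist t z = 0 := by omega
      exact hc.dist_eq_zero_iff.mp h4
    · rfl
    · exact absurd rfl htx
  subst htz
  obtain ⟨g, hgy, hgz, hgd⟩ := common_gate hbg (hadjty.symm : G.Adj y t) hy hz hk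
  have hgx : g ≠ x := by
    intro h
    rw [h] at hgd
    omega
  have hadjgx : G.Adj g x := four_cycle_adj hbg hgy hyx hzx.symm hgz.symm hgx hne
  have := adj_dist_le hadjgx.symm hc u
  omega

/-- Key lemma: in a block graph, if `ab` is an edge with `u` strictly closer to `a` and
`v` strictly closer to `b`, then the edge lies on a geodesic between `u` and `v`. -/
lemma main_dist_lemma [Fintype V] (hbg : IsBlockGraph G) {u v a b : V} {m n : ℕ}
    (hab : G.Adj a b) (hua : G.dist u a = m) (hub : G.dist u b = m + 1)
    (hvb : G.dist v b = n) (hva : G.dist v a = n + 1) :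
    G.dist u v = m + n + 1 := by
  classical
  have hc := hbg.1
  have hav : G.dist a v = n + 1 := by rw [SimpleGraph.dist_comm]; exact hva
  have hupper : G.dist u v ≤ m + n + 1 := by
    have := hc.dist_triangle (u := u) (v := a) (w := v)
    omega
  rcases Nat.eq_zero_or_pos m with rfl | hm
  · have : u = a := hc.dist_eq_zero_iff.mp hua
    subst this
    omega
  rcases Nat.eq_zero_or_pos n with rfl | hn
  · have : v = b := hc.dist_eq_zero_iff.mp hvb
    subst this
    have hl : G.dist u v ≥ m + 1 := by rw [SimpleGraph.dist_comm] at hub ⊢; omega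
    omega
  by_contra hlt
  have hD : G.dist u v ≤ m + n := by omega
  obtain ⟨P, hP⟩ := hc.exists_walk_length_eq_dist a u
  obtain ⟨Q, hQ⟩ := hc.exists_walk_length_eq_dist u v
  obtain ⟨R, hR⟩ := hc.exists_walk_length_eq_dist v b
  have hau : G.dist a u = m := by rw [SimpleGraph.dist_comm]; exact hua
  set w : G.Walk a b := P.append (Q.append R) with hw
  have hedge : s(a, b) ∉ w.edges := by
    rw [hw]
    simp only [Walk.edges_append, List.mem_append]
    rintro (h | h | h)
    · have hb' : b ∈ P.support := Walk.snd_mem_support_of_mem_edges P h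
      have hsp := walk_split_dist hc P hP hb'
      have h1 : 1 ≤ G.dist a b := hc.pos_dist_of_ne hab.ne
      have h2 : G.dist b u = G.dist u b := SimpleGraph.dist_comm
      omega
    · have ha' : a ∈ Q.support := Walk.fst_mem_support_of_mem_edges Q h
      have hsq := walk_split_dist hc Q hQ ha'
      omega
    · have ha' : a ∈ R.support := Walk.fst_mem_support_of_mem_edges R h
      have hsr := walk_split_dist hc R hR ha'
      have h1 : 1 ≤ G.dist a b := hc.pos_dist_of_ne hab.ne
      omega
  obtain ⟨x, hxs, hxa, hxb, hadjxa, hadjxb⟩ := exists_internal_vertex hbg hab w hedge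
  rw [hw, Walk.mem_support_append_iff, Walk.mem_support_append_iff] at hxs
  rcases hxs with hxP | hxQ | hxR
  · have hsp := walk_split_dist hc P hP hxP
    have h1 : 1 ≤ G.dist a x := hc.pos_dist_of_ne (Ne.symm hxa)
    have h2 : G.dist u b ≤ G.dist u x + 1 := adj_dist_le hadjxb.symm hc u
    have h3 : G.dist x u = G.dist u x := SimpleGraph.dist_comm
    omega
  · -- the residual configuration
    have hsq := walk_split_dist hc Q hQ hxQ
    have h2 : G.dist u b ≤ G.dist u x + 1 := adj_dist_le hadjxb.symm hc u
    have h3 : G.dist v a ≤ G.dist v x + 1 := by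
      have := adj_dist_le hadjxa.symm hc v
      omega
    have h4 : G.dist x v = G.dist v x := SimpleGraph.dist_comm
    have hux : G.dist u x = m := by omega
    obtain ⟨g, hgx, hga, hgd⟩ := common_gate hbg hadjxa hux hua hm
    have hgb : g ≠ b := by
      intro h
      rw [h] at hgd
      omega
    have hadjgb : G.Adj g b := four_cycle_adj hbg hga hab hadjxb.symm hgx.symm hgb (Ne.symm hxa)
    have := adj_dist_le hadjgb.symm hc u
    omega
  · have hsr := walk_split_dist hc R hR hxR
    have h1 : 1 ≤ G.dist x b := hc.pos_dist_of_ne hxb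
    have h2 : G.dist v a ≤ G.dist v x + 1 := adj_dist_le hadjxa.symm hc v
    omega

lemma dist_getVert_le (hc : G.Connected) :
    ∀ {u v : V} (w : G.Walk u v) (k : ℕ), G.dist u (w.getVert k) ≤ k := by
  intro u v w
  induction w with
  | nil =>
    intro k
    rw [Walk.getVert_of_length_le Walk.nil (by simp), SimpleGraph.dist_self]
    exact Nat.zero_le k
  | cons h p ih =>
    rename_i a b c
    intro k
    cases k with
    | zero =>
      rw [Walk.getVert_zero, SimpleGraph.dist_self]
    | succ k =>
      rw [Walk.getVert_cons_succ]
      have h1 : G.dist a (p.getVert k) ≤ G.dist a b + G.dist b (p.getVert k) :=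
        hc.dist_triangle
      have h2 : G.dist a b ≤ 1 := by
        have := G.dist_le (Walk.cons h Walk.nil)
        simpa using this
      have h3 := ih k
      omega

lemma getVert_position (hc : G.Connected) {u v : V} (w : G.Walk u v)
    (hw : w.length = G.dist u v) {k : ℕ} (hk : k ≤ w.length) :
    G.dist u (w.getVert k) = k ∧ G.dist (w.getVert k) v + k = G.dist u v := by
  have h1 : G.dist u (w.getVert k) ≤ k := dist_getVert_le hc w k
  have h2 : G.dist v (w.getVert k) ≤ w.length - k := by
    have hrev : w.reverse.getVert (w.length - k) = w.getVert k := by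
      rw [Walk.getVert_reverse]
      congr 1
      omega
    rw [← hrev]
    exact dist_getVert_le hc w.reverse _
  have h3 : G.dist u v ≤ G.dist u (w.getVert k) + G.dist (w.getVert k) v :=
    hc.dist_triangle
  have h4 : G.dist (w.getVert k) v = G.dist v (w.getVert k) := SimpleGraph.dist_comm
  omega

/-- Uniqueness of the vertex at a given position along geodesics. -/
lemma position_unique [Fintype V] (hbg : IsBlockGraph G) {u v : V} (w : G.Walk u v)
    (hw : w.length = G.dist u v) :
    ∀ (k : ℕ) (y : V), G.dist u y = k → G.dist u y + G.dist y v = G.dist u v →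
      y = w.getVert k := by
  have hc := hbg.1
  intro k
  induction k with
  | zero =>
    intro y h1 _
    rcases hc.dist_eq_zero_iff.mp h1 with rfl
    exact (Walk.getVert_zero w).symm
  | succ k ih =>
    intro y h1 h2
    have hkD : k + 1 ≤ G.dist u v := by omega
    -- gate of y
    obtain ⟨g, hgy, hgd⟩ := exists_gate hc h1
    have hgpos : G.dist u g + G.dist g v = G.dist u v := by
      have ha : G.dist g v ≤ 1 + G.dist y v := by
        have t1 : G.dist g v ≤ G.dist g y + G.dist y v := hc.dist_triangle
        have t2 : G.dist g y ≤ 1 := by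
          have := G.dist_le (Walk.cons hgy Walk.nil)
          simpa using this
        omega
      have hb : G.dist u v ≤ G.dist u g + G.dist g v := hc.dist_triangle
      omega
    have hgk := ih g hgd hgpos
    -- gate of w.getVert (k+1)
    have hxpos := getVert_position hc w hw (by omega : k + 1 ≤ w.length)
    obtain ⟨g', hg'x, hg'd⟩ := exists_gate hc hxpos.1
    have hg'pos : G.dist u g' + G.dist g' v = G.dist u v := by
      have ha : G.dist g' v ≤ 1 + G.dist (w.getVert (k + 1)) v := by
        have t1 : G.dist g' v ≤ G.dist g' (w.getVert (k + 1)) + G.dist (w.getVert (k + 1)) v :=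
          hc.dist_triangle
        have t2 : G.dist g' (w.getVert (k + 1)) ≤ 1 := by
          have := G.dist_le (Walk.cons hg'x Walk.nil)
          simpa using this
        omega
      have hb : G.dist u v ≤ G.dist u g' + G.dist g' v := hc.dist_triangle
      omega
    have hg'k := ih g' hg'd hg'pos
    -- now y and x are both neighbors of the common gate, at equal distance from v
    have hgg : g = g' := by rw [hgk, hg'k]
    -- distances from v
    have hyv : G.dist v y = G.dist u v - (k + 1) := by
      rw [SimpleGraph.dist_comm]; omega
    have hxv : G.dist v (w.getVert (k + 1)) = G.dist u v - (k + 1) := by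
      rw [SimpleGraph.dist_comm]; omega
    have hgv : G.dist v g = G.dist u v - k := by
      rw [SimpleGraph.dist_comm]; omega
    have hstep : G.dist v g = (G.dist u v - (k + 1)) + 1 := by omega
    exact unique_gate hbg hstep hgy.symm (hgg ▸ hg'x.symm) hyv hxv

lemma count_edges [Fintype V] (hbg : IsBlockGraph G) (u v : V) :
    (Finset.univ.filter (fun p : V × V =>
      G.Adj p.1 p.2 ∧ G.dist p.1 u < G.dist p.2 u ∧ G.dist p.2 v < G.dist p.1 v)).card
      = G.dist u v := by
  classical
  have hc := hbg.1
  obtain ⟨w, hw⟩ := hc.exists_walk_length_eq_dist u v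
  set D := G.dist u v with hD
  have hwl : w.length = D := hw
  have hset : (Finset.univ.filter (fun p : V × V =>
      G.Adj p.1 p.2 ∧ G.dist p.1 u < G.dist p.2 u ∧ G.dist p.2 v < G.dist p.1 v))
      = (Finset.range D).image (fun k => (w.getVert k, w.getVert (k + 1))) := by
    ext ⟨a, b⟩
    simp only [Finset.mem_filter, Finset.mem_univ, true_and, Finset.mem_image,
      Finset.mem_range, Prod.mk.injEq]
    constructor
    · rintro ⟨hadj, h1, h2⟩
      have c1 : G.dist a u = G.dist u a := SimpleGraph.dist_comm
      have c2 : G.dist b u = G.dist u b := SimpleGraph.dist_comm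
      have c3 : G.dist a v = G.dist v a := SimpleGraph.dist_comm
      have c4 : G.dist b v = G.dist v b := SimpleGraph.dist_comm
      have e1 : G.dist u b ≤ G.dist u a + 1 := adj_dist_le hadj.symm hc u
      have e2 : G.dist v a ≤ G.dist v b + 1 := adj_dist_le hadj hc v
      have hub : G.dist u b = G.dist u a + 1 := by omega
      have hva : G.dist v a = G.dist v b + 1 := by omega
      have hmain := main_dist_lemma hbg hadj rfl hub rfl hva
      have hpa : a = w.getVert (G.dist u a) := by
        apply position_unique hbg w hw
        · rfl
        · have : G.dist a v = G.dist v b + 1 := by omega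
          omega
      have hpb : b = w.getVert (G.dist u a + 1) := by
        apply position_unique hbg w hw
        · exact hub
        · omega
      exact ⟨G.dist u a, by omega, hpa.symm, hpb.symm⟩
    · rintro ⟨k, hk, rfl, rfl⟩
      have hp1 := getVert_position hc w hw (by omega : k ≤ w.length)
      have hp2 := getVert_position hc w hw (by omega : k + 1 ≤ w.length)
      have hadj : G.Adj (w.getVert k) (w.getVert (k + 1)) :=
        w.adj_getVert_succ (by omega)
      refine ⟨hadj, ?_, ?_⟩
      · have c1 : G.dist (w.getVert k) u = G.dist u (w.getVert k) := SimpleGraph.dist_comm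
        have c2 : G.dist (w.getVert (k + 1)) u = G.dist u (w.getVert (k + 1)) :=
          SimpleGraph.dist_comm
        omega
      · omega
  rw [hset, Finset.card_image_of_injOn, Finset.card_range]
  intro k1 hk1 k2 hk2 heq
  simp only [Finset.coe_range, Set.mem_Iio] at hk1 hk2
  have e1 := (getVert_position hc w hw (by omega : k1 ≤ w.length)).1
  have e2 := (getVert_position hc w hw (by omega : k2 ≤ w.length)).1
  have : w.getVert k1 = w.getVert k2 := congrArg Prod.fst heq
  rw [this] at e1
  omega

theorem stmt4_aux {V : Type*} [Fintype V] (G : SimpleGraph V) (hbg : IsBlockGraph G) :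
    ∑ u : V, ∑ v : V, G.dist u v =
      ∑ u : V, ∑ v : V, if G.Adj u v then
        {w : V | G.dist u w < G.dist v w}.ncard *
          {w : V | G.dist v w < G.dist u w}.ncard
      else 0 := by
  classical
  set F : V × V → V × V → ℕ := fun p q =>
    if G.Adj p.1 p.2 ∧ G.dist p.1 q.1 < G.dist p.2 q.1 ∧ G.dist p.2 q.2 < G.dist p.1 q.2
    then 1 else 0 with hF
  have L : ∀ u v : V, G.dist u v = ∑ p : V × V, F p (u, v) := by
    intro u v
    rw [← count_edges hbg u v, Finset.card_filter]
  have key : ∀ a b : V,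
      (if G.Adj a b then
        {w : V | G.dist a w < G.dist b w}.ncard * {w : V | G.dist b w < G.dist a w}.ncard
      else 0) = ∑ q : V × V, F (a, b) q := by
    intro a b
    by_cases h : G.Adj a b
    · simp only [h, if_true]
      have n1 : {w : V | G.dist a w < G.dist b w}.ncard
          = (Finset.univ.filter (fun w : V => G.dist a w < G.dist b w)).card := by
        rw [Set.ncard_eq_toFinset_card', Set.toFinset_setOf]
      have n2 : {w : V | G.dist b w < G.dist a w}.ncard
          = (Finset.univ.filter (fun w : V => G.dist b w < G.dist a w)).card := by
        rw [Set.ncard_eq_toFinset_card', Set.toFinset_setOf]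
      rw [n1, n2, Finset.card_filter, Finset.card_filter, Finset.sum_mul_sum,
        Fintype.sum_prod_type]
      refine Finset.sum_congr rfl fun x _ => Finset.sum_congr rfl fun y _ => ?_
      simp only [hF, h, true_and]
      by_cases h1 : G.dist a x < G.dist b x <;> by_cases h2 : G.dist b y < G.dist a y <;>
        simp [h1, h2]
    · simp only [h, if_false, hF]
      rw [Finset.sum_eq_zero]
      rintro ⟨x, y⟩ -
      simp [h]
  calc ∑ u : V, ∑ v : V, G.dist u v
      = ∑ u : V, ∑ v : V, ∑ p : V × V, F p (u, v) := by
        exact Finset.sum_congr rfl fun u _ => Finset.sum_congr rfl fun v _ => L u v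
    _ = ∑ q : V × V, ∑ p : V × V, F p q := (Fintype.sum_prod_type (fun q : V × V => ∑ p : V × V, F p q)).symm
    _ = ∑ p : V × V, ∑ q : V × V, F p q := Finset.sum_comm
    _ = ∑ a : V, ∑ b : V, ∑ q : V × V, F (a, b) q := Fintype.sum_prod_type (fun p : V × V => ∑ q : V × V, F p q)
    _ = ∑ u : V, ∑ v : V, (if G.Adj u v then
          {w : V | G.dist u w < G.dist v w}.ncard *
            {w : V | G.dist v w < G.dist u w}.ncard
        else 0) := by
        exact Finset.sum_congr rfl fun a _ => Finset.sum_congr rfl fun b _ => (key a b).symm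


end BlockGraphProofAux

/-- Edge decomposition of the Wiener index of a block graph: the sum of all distances
equals the sum over edges ab of N_ab * N_ba.
(Both sides are stated over ordered pairs, hence count each contribution twice.) -/
theorem stmt4 {V : Type*} [Fintype V] (G : SimpleGraph V) (hbg : IsBlockGraph G) :
    ∑ u : V, ∑ v : V, G.dist u v =
      ∑ u : V, ∑ v : V, if G.Adj u v then
        {w : V | G.dist u w < G.dist v w}.ncard *
          {w : V | G.dist v w < G.dist u w}.ncard
      else 0 :=
  BlockGraphProofAux.stmt4_aux G hbg
end

section
/- In a block graph, any two vertices are connected by a unique shortest path. -/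
open SimpleGraph Finset
open scoped Classical

section Helpers

variable {V : Type*} {G : SimpleGraph V}

lemma reach_ind (S : Set V) : ∀ {a b : V} (W : G.Walk a b)
    (hW : ∀ x ∈ W.support, x ∈ S),
    (G.induce S).Reachable ⟨a, hW a W.start_mem_support⟩ ⟨b, hW b W.end_mem_support⟩ := by
  intro a b W
  induction W with
  | nil => intro hW; rfl
  | cons h W ih =>
    intro hW
    have hW' : ∀ x ∈ W.support, x ∈ S := fun x hx => hW x (by simp [hx])
    refine Reachable.trans ?_ (ih hW')
    exact Adj.reachable (by simpa using h)

lemma hub_conn (S : Set V) (b : V) (hb : b ∈ S)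
    (h : ∀ a ∈ S, ∃ W : G.Walk a b, ∀ x ∈ W.support, x ∈ S) :
    (G.induce S).Connected := by
  rw [connected_iff_exists_forall_reachable]
  refine ⟨⟨b, hb⟩, fun x => ?_⟩
  obtain ⟨Wx, hWx⟩ := h x.1 x.2
  exact (reach_ind S Wx hWx).symm

lemma support_take_drop [DecidableEq V] {a b x z : V} {P : G.Walk a b} (hP : P.IsPath)
    (hx : x ∈ P.support) (h1 : z ∈ (P.takeUntil x hx).support)
    (h2 : z ∈ (P.dropUntil x hx).support) : z = x := by
  have hs : P.support = (P.takeUntil x hx).support ++ (P.dropUntil x hx).support.tail := by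
    conv_lhs => rw [← P.take_spec hx]
    rw [Walk.support_append]
  have hnd : P.support.Nodup := hP.support_nodup
  rw [hs] at hnd
  have hdisj := List.disjoint_of_nodup_append hnd
  have h2' : z = x ∨ z ∈ (P.dropUntil x hx).support.tail := by
    have := (P.dropUntil x hx).support_eq_cons
    rw [this] at h2
    exact List.mem_cons.mp h2
  rcases h2' with h2' | h2'
  · exact h2'
  · exact absurd h2' (hdisj h1)

section TwoPath
variable [DecidableEq V] {u y : V} {p₁ q₁ : G.Walk u y}

lemma twopath_del (hp : p₁.IsPath) (hq : q₁.IsPath) (huy : u ≠ y)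
    (hdisj : ∀ z, z ∈ p₁.support → z ∈ q₁.support → z = u ∨ z = y)
    {z : V} (hz₁ : z ∈ p₁.support) (hzu : z ≠ u) (hzy : z ≠ y) :
    (G.induce (({x | x ∈ p₁.support} ∪ {x | x ∈ q₁.support}) \ {z})).Connected := by
  have znotq : z ∉ q₁.support := fun hzq => by
    rcases hdisj z hz₁ hzq with h | h
    exacts [hzu h, hzy h]
  refine hub_conn _ y ⟨Or.inl (by exact p₁.end_mem_support), by simpa using (Ne.symm hzy)⟩ ?_
  rintro a ⟨ha, haz⟩
  have haz : a ≠ z := by simpa using haz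
  by_cases haq : a ∈ q₁.support
  · refine ⟨q₁.dropUntil a haq, fun x hx => ?_⟩
    have hxq : x ∈ q₁.support := q₁.support_dropUntil_subset haq hx
    have hne : x ≠ z := fun hh => znotq (hh ▸ hxq)
    exact ⟨Or.inr hxq, by simpa using hne⟩
  · have ha₁ : a ∈ p₁.support := by
      rcases ha with h | h
      · exact h
      · exact absurd h haq
    by_cases hzt : z ∈ (p₁.takeUntil a ha₁).support
    · refine ⟨p₁.dropUntil a ha₁, fun x hx => ?_⟩
      have hxp : x ∈ p₁.support := p₁.support_dropUntil_subset ha₁ hx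
      have hne : x ≠ z := fun hh => haz (support_take_drop hp ha₁ hzt (hh ▸ hx)).symm
      exact ⟨Or.inl hxp, by simpa using hne⟩
    · refine ⟨((p₁.takeUntil a ha₁).reverse).append q₁, fun x hx => ?_⟩
      rw [Walk.mem_support_append_iff, Walk.support_reverse, List.mem_reverse] at hx
      rcases hx with hx | hx
      · have hne : x ≠ z := fun hh => hzt (hh ▸ hx)
        exact ⟨Or.inl (p₁.support_takeUntil_subset ha₁ hx), by simpa using hne⟩
      · have hne : x ≠ z := fun hh => znotq (hh ▸ hx)
        exact ⟨Or.inr hx, by simpa using hne⟩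

lemma twopath_bicon (hp : p₁.IsPath) (hq : q₁.IsPath) (huy : u ≠ y)
    (hdisj : ∀ z, z ∈ p₁.support → z ∈ q₁.support → z = u ∨ z = y) :
    IsBiconnectedSet G ({x | x ∈ p₁.support} ∪ {x | x ∈ q₁.support}) := by
  set S : Set V := {x | x ∈ p₁.support} ∪ {x | x ∈ q₁.support} with hS
  constructor
  · refine hub_conn S u (Or.inl p₁.start_mem_support) ?_
    rintro a (ha | ha)
    · exact ⟨(p₁.takeUntil a ha).reverse, fun x hx => by
        rw [Walk.support_reverse, List.mem_reverse] at hx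
        exact Or.inl (p₁.support_takeUntil_subset ha hx)⟩
    · exact ⟨(q₁.takeUntil a ha).reverse, fun x hx => by
        rw [Walk.support_reverse, List.mem_reverse] at hx
        exact Or.inr (q₁.support_takeUntil_subset ha hx)⟩
  · rintro z hz -
    by_cases hzu : z = u
    · subst hzu
      refine hub_conn _ y ⟨Or.inl p₁.end_mem_support, by simpa using (Ne.symm huy)⟩ ?_
      rintro a ⟨ha, haz⟩
      have haz : a ≠ z := by simpa using haz
      rcases ha with ha | ha
      · refine ⟨p₁.dropUntil a ha, fun x hx => ?_⟩
        have hne : x ≠ z := fun hh =>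
          haz (support_take_drop hp ha (p₁.takeUntil a ha).start_mem_support (hh ▸ hx)).symm
        exact ⟨Or.inl (p₁.support_dropUntil_subset ha hx), by simpa using hne⟩
      · refine ⟨q₁.dropUntil a ha, fun x hx => ?_⟩
        have hne : x ≠ z := fun hh =>
          haz (support_take_drop hq ha (q₁.takeUntil a ha).start_mem_support (hh ▸ hx)).symm
        exact ⟨Or.inr (q₁.support_dropUntil_subset ha hx), by simpa using hne⟩
    · by_cases hzy : z = y
      · subst hzy
        refine hub_conn _ u ⟨Or.inl p₁.start_mem_support, by simpa using (Ne.symm hzu)⟩ ?_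
        rintro a ⟨ha, haz⟩
        have haz : a ≠ z := by simpa using haz
        rcases ha with ha | ha
        · refine ⟨(p₁.takeUntil a ha).reverse, fun x hx => ?_⟩
          rw [Walk.support_reverse, List.mem_reverse] at hx
          have hne : x ≠ z := fun hh =>
            haz (support_take_drop hp ha (hh ▸ hx) (hh ▸ (p₁.dropUntil a ha).end_mem_support)).symm
          exact ⟨Or.inl (p₁.support_takeUntil_subset ha hx), by simpa using hne⟩
        · refine ⟨(q₁.takeUntil a ha).reverse, fun x hx => ?_⟩
          rw [Walk.support_reverse, List.mem_reverse] at hx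
          have hne : x ≠ z := fun hh =>
            haz (support_take_drop hq ha (hh ▸ hx) (hh ▸ (q₁.dropUntil a ha).end_mem_support)).symm
          exact ⟨Or.inr (q₁.support_takeUntil_subset ha hx), by simpa using hne⟩
      · rcases hz with hz | hz
        · exact twopath_del hp hq huy hdisj hz hzu hzy
        · have hsymm : ∀ z', z' ∈ q₁.support → z' ∈ p₁.support → z' = u ∨ z' = y :=
            fun z' h1 h2 => hdisj z' h2 h1
          have := twopath_del (p₁ := q₁) (q₁ := p₁) hq hp huy hsymm hz hzu hzy
          have hset : ({x | x ∈ q₁.support} ∪ {x | x ∈ p₁.support}) = S := by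
            rw [hS, Set.union_comm]
          rwa [hset] at this

end TwoPath


lemma prefix_dist (hc : G.Connected) {u v x : V} (p₁ : G.Walk u x) (p₂ : G.Walk x v)
    (h : (p₁.append p₂).length = G.dist u v) : p₁.length = G.dist u x := by
  have h1 := G.dist_le p₁
  have h2 := G.dist_le p₂
  have h3 := hc.dist_triangle (u := u) (v := x) (w := v)
  rw [Walk.length_append] at h
  omega

lemma block_extend [Fintype V] (G : SimpleGraph V) :
    ∀ (k : ℕ) (S : Set V), 2 ≤ S.ncard → IsBiconnectedSet G S →
      Fintype.card V ≤ S.ncard + k → ∃ B, S ⊆ B ∧ IsBlock G B := by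
  intro k
  induction k with
  | zero =>
    intro S h2 hb hcard
    refine ⟨S, subset_rfl, h2, hb, fun B' hSB h2' hb' => ?_⟩
    have hle : B'.ncard ≤ S.ncard := by
      have := Set.ncard_le_ncard (Set.subset_univ B') Set.finite_univ
      rw [Set.ncard_univ, Nat.card_eq_fintype_card] at this
      omega
    exact (Set.eq_of_subset_of_ncard_le hSB hle (Set.toFinite B')).symm
  | succ k ih =>
    intro S h2 hb hcard
    by_cases hmax : ∀ B' : Set V, S ⊆ B' → 2 ≤ B'.ncard → IsBiconnectedSet G B' → B' = S
    · exact ⟨S, subset_rfl, h2, hb, hmax⟩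
    · push_neg at hmax
      obtain ⟨B', hSB, h2', hb', hne⟩ := hmax
      have hlt : S.ncard < B'.ncard :=
        Set.ncard_lt_ncard (hSB.ssubset_of_ne (fun h => hne h.symm)) (Set.toFinite B')
      obtain ⟨B, hB1, hB2⟩ := ih B' h2' hb' (by omega)
      exact ⟨B, hSB.trans hB1, hB2⟩


lemma takeUntil_length_lt [DecidableEq V] :
    ∀ {a b : V} (p : G.Walk a b) (y z : V) (hy : y ∈ p.support) (hz : z ∈ p.support),
      z ∈ (p.takeUntil y hy).support → z ≠ y →
      (p.takeUntil z hz).length < (p.takeUntil y hy).length := by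
  intro a b p
  induction p with
  | nil =>
    intro y z hy hz h hne
    rw [Walk.mem_support_nil_iff] at hy hz
    subst hy; subst hz
    exact absurd rfl hne
  | cons r p ih =>
    intro y z hy hz h hne
    rename_i a c b
    by_cases hay : a = y
    · subst hay
      rw [show (Walk.cons r p).takeUntil a hy = Walk.nil from by simp [Walk.takeUntil]] at h
      simp at h
      exact absurd h hne
    · have hy' : y ∈ p.support := by
        cases hy with
        | head => exact absurd rfl hay
        | tail _ h' => exact h'
      have htu : (Walk.cons r p).takeUntil y hy = Walk.cons r (p.takeUntil y hy') := by
        simp [Walk.takeUntil, hay]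
      by_cases haz : a = z
      · subst haz
        rw [show (Walk.cons r p).takeUntil a hz = Walk.nil from by simp [Walk.takeUntil]]
        rw [htu]
        simp
      · have hz' : z ∈ p.support := by
          cases hz with
          | head => exact absurd rfl haz
          | tail _ h' => exact h'
        have htz : (Walk.cons r p).takeUntil z hz = Walk.cons r (p.takeUntil z hz') := by
          simp [Walk.takeUntil, haz]
        rw [htu] at h
        have hzin : z ∈ (p.takeUntil y hy').support := by
          rw [Walk.support_cons] at h
          cases h with
          | head => exact absurd rfl haz
          | tail _ h' => exact h'
        rw [htz, htu]
        simpa using ih y z hy' hz' hzin hne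



lemma blockclique {V : Type*} [Fintype V] [DecidableEq V] {G : SimpleGraph V}
    {u y : V} {p₁ q₁ : G.Walk u y}
    (hbg : IsBlockGraph G) (hp : p₁.IsPath) (hq : q₁.IsPath) (huy : u ≠ y)
    (hdisj : ∀ z, z ∈ p₁.support → z ∈ q₁.support → z = u ∨ z = y) : G.Adj u y := by
  set S : Set V := {x | x ∈ p₁.support} ∪ {x | x ∈ q₁.support} with hS
  have hbic : IsBiconnectedSet G S := twopath_bicon hp hq huy hdisj
  have huS : u ∈ S := Or.inl p₁.start_mem_support
  have hyS : y ∈ S := Or.inl p₁.end_mem_support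
  have h2 : 2 ≤ S.ncard := by
    have hsub : ({u, y} : Set V) ⊆ S := by
      rintro x (rfl | rfl)
      exacts [huS, hyS]
    have hle := Set.ncard_le_ncard hsub (Set.toFinite S)
    rwa [Set.ncard_pair huy] at hle
  obtain ⟨B, hSB, hB⟩ := block_extend G (Fintype.card V) S h2 hbic (by omega)
  exact hbg.2 B hB (hSB huS) (hSB hyS) huy


end Helpers

/-- In a block graph any two vertices are connected by a unique shortest path. -/
theorem stmt5 {V : Type*} [Fintype V] (G : SimpleGraph V) (hbg : IsBlockGraph G)
    (u v : V) (p q : G.Walk u v) (hp : p.IsPath) (hq : q.IsPath)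
    (hpl : p.length = G.dist u v) (hql : q.length = G.dist u v) :
    p = q := by
  have hconn : G.Connected := hbg.1
  suffices H : ∀ n (u v : V) (p q : G.Walk u v), p.IsPath → q.IsPath →
      p.length = G.dist u v → q.length = G.dist u v → p.length = n → p = q from
    H p.length u v p q hp hq hpl hql rfl
  intro n
  induction n with
  | zero =>
    intro u v p q hp hq hpl hql hn
    have huv : u = v := Walk.eq_of_length_eq_zero hn
    subst huv
    have h0 : G.dist u u = 0 := by simp
    rw [h0] at hpl hql
    rw [Walk.length_eq_zero_iff] at hpl hql
    rw [hpl.eq_nil, hql.eq_nil]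
  | succ n IH =>
    intro u v p q hp hq hpl hql hn
    cases p with
    | nil => simp at hn
    | cons radj p' =>
      cases q with
      | nil =>
        exfalso
        simp only [Walk.length_nil] at hql
        rw [← hql] at hpl
        simp at hpl
      | cons sadj q' =>
        rename_i w w'
        -- lengths of tails
        have hdp' : G.dist u v ≤ 1 + G.dist w v := by
          have h1 := hconn.dist_triangle (u := u) (v := w) (w := v)
          have h2 := G.dist_le (Walk.cons radj Walk.nil)
          simp only [Walk.length_cons, Walk.length_nil] at h2
          omega
        have hlp' : p'.length = G.dist w v := by
          have h1 := G.dist_le p'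
          simp only [Walk.length_cons] at hpl
          omega
        have hdq' : G.dist u v ≤ 1 + G.dist w' v := by
          have h1 := hconn.dist_triangle (u := u) (v := w') (w := v)
          have h2 := G.dist_le (Walk.cons sadj Walk.nil)
          simp only [Walk.length_cons, Walk.length_nil] at h2
          omega
        have hlq' : q'.length = G.dist w' v := by
          have h1 := G.dist_le q'
          simp only [Walk.length_cons] at hql
          omega
        by_cases hww : w = w'
        · subst hww
          have hp' : p'.IsPath := (Walk.cons_isPath_iff _ _ |>.mp hp).1
          have hq' : q'.IsPath := (Walk.cons_isPath_iff _ _ |>.mp hq).1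
          have hlen : p'.length = n := by
            simp only [Walk.length_cons] at hn
            omega
          have := IH w v p' q' hp' hq' hlp' hlq' hlen
          rw [this, Subsingleton.elim radj sadj]
        · exfalso
          set P : G.Walk u v := Walk.cons radj p' with hP
          set Q : G.Walk u v := Walk.cons sadj q' with hQ
          have hvp : v ∈ p'.support := p'.end_mem_support
          have hvq : v ∈ q'.support := q'.end_mem_support
          set T : Finset V := Finset.univ.filter (fun x => x ∈ p'.support ∧ x ∈ q'.support)
            with hT
          have hTne : T.Nonempty := ⟨v, by simp [hT, hvp, hvq]⟩
          set f : V → ℕ := fun x => if hx : x ∈ P.support then (P.takeUntil x hx).length else 0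
            with hf
          obtain ⟨y, hyT, hymin⟩ := T.exists_min_image f hTne
          simp only [hT, Finset.mem_filter, Finset.mem_univ, true_and] at hyT
          obtain ⟨hyp', hyq'⟩ := hyT
          have hyP : y ∈ P.support := by rw [hP, Walk.support_cons]; exact List.mem_cons_of_mem _ hyp'
          have hyQ : y ∈ Q.support := by rw [hQ, Walk.support_cons]; exact List.mem_cons_of_mem _ hyq'
          have hyu : y ≠ u := by
            rintro rfl
            exact (Walk.cons_isPath_iff _ _ |>.mp hp).2 hyp'
          set p₁ : G.Walk u y := P.takeUntil y hyP with hp₁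
          set q₁ : G.Walk u y := Q.takeUntil y hyQ with hq₁
          have hp₁path : p₁.IsPath := hp.takeUntil hyP
          have hq₁path : q₁.IsPath := hq.takeUntil hyQ
          have hp₁len : p₁.length = G.dist u y := by
            refine prefix_dist hconn p₁ (P.dropUntil y hyP) ?_
            rw [P.take_spec hyP]
            exact hpl
          have hq₁len : q₁.length = G.dist u y := by
            refine prefix_dist hconn q₁ (Q.dropUntil y hyQ) ?_
            rw [Q.take_spec hyQ]
            exact hql
          -- internal disjointness
          have hdisj : ∀ z, z ∈ p₁.support → z ∈ q₁.support → z = u ∨ z = y := by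
            intro z hz1 hz2
            by_contra hcon
            push_neg at hcon
            obtain ⟨hzu, hzy⟩ := hcon
            have hzP : z ∈ P.support := P.support_takeUntil_subset hyP hz1
            have hzQ : z ∈ Q.support := Q.support_takeUntil_subset hyQ hz2
            have hzp' : z ∈ p'.support := by
              rw [hP, Walk.support_cons] at hzP
              cases hzP with
              | head => exact absurd rfl hzu
              | tail _ h => exact h
            have hzq' : z ∈ q'.support := by
              rw [hQ, Walk.support_cons] at hzQ
              cases hzQ with
              | head => exact absurd rfl hzu
              | tail _ h => exact h
            have hzT : z ∈ T := by simp [hT, hzp', hzq']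
            have hmin := hymin z hzT
            have hlt := takeUntil_length_lt P y z hyP hzP hz1 hzy
            rw [hf] at hmin
            simp only [dif_pos hyP, dif_pos hzP] at hmin
            omega
          -- dist u y ≥ 2
          have h1le : 1 ≤ p₁.length := by
            rcases Nat.eq_zero_or_pos p₁.length with h0 | h1
            · exact absurd (Walk.eq_of_length_eq_zero h0) (Ne.symm hyu)
            · exact h1
          have hdist2 : 2 ≤ G.dist u y := by
            by_contra hlt
            push_neg at hlt
            have hp₁1 : p₁.length = 1 := by omega
            have hq₁1 : q₁.length = 1 := by rw [hq₁len, ← hp₁len]; exact hp₁1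
            -- second vertex of P is y
            have hwy : w = y := by
              have e1 : P.getVert 1 = w := by
                rw [hP]
                rw [Walk.getVert_cons p' radj (by norm_num)]
                exact p'.getVert_zero
              have e2 : P.getVert 1 = y := by
                conv_lhs => rw [← P.take_spec hyP]
                rw [Walk.getVert_append]
                rw [← hp₁] at *
                rw [hp₁1]
                simp
              rw [← e1, e2]
            have hw'y : w' = y := by
              have e1 : Q.getVert 1 = w' := by
                rw [hQ]
                rw [Walk.getVert_cons q' sadj (by norm_num)]
                exact q'.getVert_zero
              have e2 : Q.getVert 1 = y := by
                conv_lhs => rw [← Q.take_spec hyQ]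
                rw [Walk.getVert_append]
                rw [← hq₁] at *
                rw [hq₁1]
                simp
              rw [← e1, e2]
            exact hww (hwy.trans hw'y.symm)
          have hadj : G.Adj u y := blockclique hbg hp₁path hq₁path (Ne.symm hyu) hdisj
          have : G.dist u y ≤ 1 := by
            have := G.dist_le (Walk.cons hadj Walk.nil)
            simpa using this
          omega
end

section
/- Let G be a connected block graph on n vertices with set of cut vertices V_c(G), and let 2 ≤ k ≤ n. Then SW_k(G) = ∑_{v ∈ V_c(G)} N_k(G∖v) + (k−1)·C(n,k), where N_k(G∖v) is the number of k-element subsets of V(G)∖{v} meeting at least two connected components of G∖v. -/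
open SimpleGraph Finset
open scoped Classical

section Lemmas

variable {V : Type*} {G : SimpleGraph V}

/-- notation for deleting a vertex's edges -/
private abbrev Gv (G : SimpleGraph V) (v : V) : SimpleGraph V := G.deleteEdges {e | v ∈ e}

/-- B1: a walk avoiding `v` yields reachability after deleting edges at `v`. -/
lemma reach_del_of_walk {a b v : V} (p : G.Walk a b) (hv : v ∉ p.support) :
    (Gv G v).Reachable a b := by
  refine ⟨p.toDeleteEdges _ (fun e he hmem => hv ?_)⟩
  rw [Set.mem_setOf_eq, Sym2.mem_iff_exists] at hmem
  obtain ⟨y, rfl⟩ := hmem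
  exact p.fst_mem_support_of_mem_edges he

/-- B2: a walk in `Gv G v` starting away from `v` avoids `v`. -/
lemma not_mem_support_of_del {a b v : V} (p : (Gv G v).Walk a b) (ha : a ≠ v) :
    v ∉ p.support := by
  induction p with
  | nil => simpa using ha.symm
  | cons h q ih =>
    rename_i u c w
    have hc : c ≠ v := by
      rcases (SimpleGraph.deleteEdges_adj.mp h) with ⟨-, hne⟩
      intro hcv; exact hne (by simp [hcv])
    simp only [SimpleGraph.Walk.support_cons, List.mem_cons]
    rintro (rfl | hmem)
    · exact ha rfl
    · exact ih hc hmem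

/-- B2': from reachability in `Gv G x`, get a path in `G` avoiding `x`. -/
lemma exists_path_avoiding {a b x : V} (h : (Gv G x).Reachable a b) (hax : a ≠ x) :
    ∃ r : G.Walk a b, r.IsPath ∧ x ∉ r.support := by
  obtain ⟨p⟩ := h
  set q : (Gv G x).Walk a b := p.toPath.1 with hqdef
  have hq : q.IsPath := p.toPath.2
  have hx : x ∉ q.support := not_mem_support_of_del _ hax
  refine ⟨q.map (SimpleGraph.Hom.ofLE (G.deleteEdges_le _)), ?_, ?_⟩
  · exact SimpleGraph.Walk.map_isPath_of_injective
      (fun u v huv => by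
        simpa [SimpleGraph.Hom.ofLE_apply] using huv) hq
  · rw [SimpleGraph.Walk.support_map]
    simpa [SimpleGraph.Hom.ofLE_apply] using hx

/-- B3: on a path, the prefix up to `u ≠ c` avoids the endpoint `c`. -/
lemma end_not_mem_takeUntil {s c u : V} (p : G.Walk s c) (hp : p.IsPath)
    (hu : u ∈ p.support) (huc : u ≠ c) : c ∉ (p.takeUntil u hu).support := by
  have hsp : p.support = (p.takeUntil u hu).support ++ (p.dropUntil u hu).support.tail := by
    rw [← SimpleGraph.Walk.support_append, p.take_spec hu]
  have hnd : (p.support).Nodup := hp.support_nodup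
  rw [hsp] at hnd
  have hdisj := List.disjoint_of_nodup_append hnd
  intro hc
  apply hdisj hc
  have hcd : c ∈ (p.dropUntil u hu).support := (p.dropUntil u hu).end_mem_support
  rw [(p.dropUntil u hu).support_eq_cons, List.mem_cons] at hcd
  rcases hcd with rfl | hcd
  · exact absurd rfl huc
  · exact hcd

/-- start not in dropUntil -/
lemma start_not_mem_dropUntil {s c u : V} (p : G.Walk s c) (hp : p.IsPath)
    (hu : u ∈ p.support) (hus : u ≠ s) : s ∉ (p.dropUntil u hu).support := by
  have hsp : p.support = (p.takeUntil u hu).support ++ (p.dropUntil u hu).support.tail := by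
    rw [← SimpleGraph.Walk.support_append, p.take_spec hu]
  have hnd : (p.support).Nodup := hp.support_nodup
  rw [hsp] at hnd
  have hdisj := List.disjoint_of_nodup_append hnd
  intro hc
  rw [(p.dropUntil u hu).support_eq_cons, List.mem_cons] at hc
  rcases hc with rfl | hc
  · exact hus rfl
  · exact hdisj (p.takeUntil u hu).start_mem_support hc

/-- escape lemma: a vertex on a path can reach one of the endpoints avoiding `w`. -/
lemma escape_along_path {a b : V} (r : G.Walk a b) (hr : r.IsPath) (w y : V)
    (hy : y ∈ r.support) (hyw : y ≠ w) :
    (∃ q : G.Walk y a, w ∉ q.support ∧ ∀ z ∈ q.support, z ∈ r.support) ∨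
    (∃ q : G.Walk y b, w ∉ q.support ∧ ∀ z ∈ q.support, z ∈ r.support) := by
  have hsp : r.support = (r.takeUntil y hy).support ++ (r.dropUntil y hy).support.tail := by
    rw [← SimpleGraph.Walk.support_append, r.take_spec hy]
  have hnd : (r.support).Nodup := hr.support_nodup
  rw [hsp] at hnd
  have hdisj := List.disjoint_of_nodup_append hnd
  by_cases hw : w ∈ (r.takeUntil y hy).support
  · right
    refine ⟨r.dropUntil y hy, ?_, fun z hz => r.support_dropUntil_subset hy hz⟩
    intro hcon
    rw [(r.dropUntil y hy).support_eq_cons, List.mem_cons] at hcon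
    rcases hcon with rfl | hcon
    · exact hyw rfl
    · exact hdisj hw hcon
  · left
    refine ⟨(r.takeUntil y hy).reverse, ?_, fun z hz => ?_⟩
    · rwa [SimpleGraph.Walk.support_reverse, List.mem_reverse]
    · rw [SimpleGraph.Walk.support_reverse, List.mem_reverse] at hz
      exact r.support_takeUntil_subset hy hz

/-- P1: walk inside `B` gives reachability in the induced graph. -/
lemma reach_induce {B : Set V} :
    ∀ {u w : V} (p : G.Walk u w), (∀ z ∈ p.support, z ∈ B) → ∀ (hu : u ∈ B) (hw : w ∈ B),
      (G.induce B).Reachable ⟨u, hu⟩ ⟨w, hw⟩ := by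
  intro u w p
  induction p with
  | nil => intro _ hu hw; rfl
  | @cons x c w' h q ih =>
    intro hsub hu hw
    have hc : c ∈ B := hsub c (by simp [SimpleGraph.Walk.support_cons])
    have h1 : (G.induce B).Adj ⟨x, hu⟩ ⟨c, hc⟩ := by
      simp only [SimpleGraph.comap_adj, Function.Embedding.coe_subtype]
      exact h
    exact (h1.reachable).trans (ih (fun z hz => hsub z (by simp [SimpleGraph.Walk.support_cons, hz])) hc hw)

/-- P1'': a walk in an induced graph avoiding `v` gives reachability in `Gv G v`. -/
lemma induce_reach_del {B : Set V} {v : V} (hv : v ∉ B) :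
    ∀ {x y : ↥B} (p : (G.induce B).Walk x y), (Gv G v).Reachable x.1 y.1 := by
  intro x y p
  induction p with
  | nil => rfl
  | @cons x c w' h q ih =>
    have hadj : (Gv G v).Adj x.1 c.1 := by
      simp only [SimpleGraph.comap_adj, Function.Embedding.coe_subtype] at h
      rw [SimpleGraph.deleteEdges_adj]
      refine ⟨h, ?_⟩
      rw [Set.mem_setOf_eq, Sym2.mem_iff]
      rintro (rfl | rfl)
      · exact hv x.2
      · exact hv c.2
    exact hadj.reachable.trans ih

/-- hub: if everything reaches a hub in the induced graph, it's connected. -/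
lemma induce_connected_of_hub {B : Set V} (x : V) (hx : x ∈ B)
    (h : ∀ y (hy : y ∈ B), (G.induce B).Reachable ⟨y, hy⟩ ⟨x, hx⟩) :
    (G.induce B).Connected := by
  rw [SimpleGraph.connected_iff]
  exact ⟨fun u v => (h u.1 u.2).trans (h v.1 v.2).symm, ⟨⟨x, hx⟩⟩⟩

/-- L1 -/
lemma reach_del_or {v a : V} (hG : G.Connected) (hva : v ≠ a) (s : V) :
    (Gv G v).Reachable s a ∨ (Gv G a).Reachable s v := by
  by_cases hsa : s = a
  · subst hsa; exact Or.inl (SimpleGraph.Reachable.refl _)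
  by_cases hsv : s = v
  · subst hsv; exact Or.inr (SimpleGraph.Reachable.refl _)
  obtain ⟨p0⟩ := hG.preconnected s a
  set p : G.Walk s a := p0.toPath.1 with hpdef
  have hp : p.IsPath := p0.toPath.2
  by_cases hv : v ∈ p.support
  · set t : G.Walk s v := p.takeUntil v hv with htdef
    have ht : t.IsPath := hp.takeUntil hv
    by_cases ha : a ∈ t.support
    · left
      refine reach_del_of_walk (t.takeUntil a ha) ?_
      exact end_not_mem_takeUntil t ht ha (Ne.symm hva)
    · right
      exact reach_del_of_walk t ha
  · left
    exact reach_del_of_walk p hv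

/-- L2 -/
lemma reach_del_of_sep {a s1 s2 v : V} (hG : G.Connected)
    (hsep : ¬ (Gv G a).Reachable s1 s2) (hva : v ≠ a) :
    (Gv G v).Reachable s1 a ∨ (Gv G v).Reachable s2 a := by
  rcases reach_del_or hG hva s1 with h1 | h1
  · exact Or.inl h1
  rcases reach_del_or hG hva s2 with h2 | h2
  · exact Or.inr h2
  exact absurd (h1.trans h2.symm) hsep

/-- cut vertex from separation -/
lemma isCutVertex_of_sep {v a b : V} (hG : G.Connected)
    (hsep : ¬ (Gv G v).Reachable a b) (hva : v ≠ a) (hvb : v ≠ b) :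
    G.Connected ∧ ¬ (G.induce {u | u ≠ v}).Connected := by
  refine ⟨hG, fun hc => hsep ?_⟩
  have ha : a ∈ {u | u ≠ v} := Ne.symm hva
  have hb : b ∈ {u | u ≠ v} := Ne.symm hvb
  obtain ⟨p⟩ := hc.preconnected ⟨a, ha⟩ ⟨b, hb⟩
  exact induce_reach_del (by simp) p

/-- P2': the union of a path and an extra vertex adjacent to both ends is biconnected. -/
lemma theta_biconn {a b x : V} (r : G.Walk a b) (hr : r.IsPath) (hx : x ∉ r.support)
    (hxa : G.Adj x a) (hxb : G.Adj x b) :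
    IsBiconnectedSet G (insert x {y | y ∈ r.support}) := by
  set B : Set V := insert x {y | y ∈ r.support} with hB
  have hxB : x ∈ B := Set.mem_insert _ _
  have hsuppB : ∀ z ∈ r.support, z ∈ B := fun z hz => Set.mem_insert_of_mem _ hz
  have haB : a ∈ B := hsuppB a r.start_mem_support
  have hbB : b ∈ B := hsuppB b r.end_mem_support
  constructor
  · refine induce_connected_of_hub x hxB (fun y hy => ?_)
    rcases Set.mem_insert_iff.mp hy with rfl | hy'
    · rfl
    · have h1 : (G.induce B).Reachable ⟨y, hy⟩ ⟨a, haB⟩ := by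
        refine reach_induce (r.takeUntil y hy').reverse (fun z hz => ?_) _ _
        rw [SimpleGraph.Walk.support_reverse, List.mem_reverse] at hz
        exact hsuppB z (r.support_takeUntil_subset hy' hz)
      refine h1.trans (SimpleGraph.Adj.reachable ?_)
      simp only [SimpleGraph.comap_adj, Function.Embedding.coe_subtype]
      exact hxa.symm
  · intro w hw hne
    by_cases hwx : w = x
    · -- removing x : the path remains
      have hxs : ∀ z ∈ r.support, z ∈ B \ {w} := fun z hz =>
        ⟨hsuppB z hz, fun h => hx (hwx ▸ (Set.mem_singleton_iff.mp h) ▸ hz)⟩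
      have haB' : a ∈ B \ {w} := hxs a r.start_mem_support
      refine induce_connected_of_hub a haB' (fun y hy => ?_)
      have hy' : y ∈ r.support := by
        rcases Set.mem_insert_iff.mp hy.1 with h | h
        · exact absurd (Set.mem_singleton_iff.mpr (h.trans hwx.symm)) hy.2
        · exact h
      refine reach_induce (r.takeUntil y hy').reverse (fun z hz => ?_) _ _
      rw [SimpleGraph.Walk.support_reverse, List.mem_reverse] at hz
      exact hxs z (r.support_takeUntil_subset hy' hz)
    · -- removing a path vertex: hub x
      have hxB' : x ∈ B \ {w} := ⟨hxB, fun h => hwx (Set.mem_singleton_iff.mp h).symm⟩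
      refine induce_connected_of_hub x hxB' (fun y hy => ?_)
      rcases Set.mem_insert_iff.mp hy.1 with rfl | hy'
      · rfl
      · have hyw : y ≠ w := by simpa using hy.2
        rcases escape_along_path r hr w y hy' hyw with ⟨q, hqw, hqsub⟩ | ⟨q, hqw, hqsub⟩
        · have haB' : a ∈ B \ {w} :=
            ⟨haB, fun h => hqw ((Set.mem_singleton_iff.mp h) ▸ q.end_mem_support)⟩
          have h1 : (G.induce (B \ {w})).Reachable ⟨y, hy⟩ ⟨a, haB'⟩ := by
            refine reach_induce q (fun z hz => ?_) _ _
            exact ⟨hsuppB z (hqsub z hz), fun hzz => hqw ((Set.mem_singleton_iff.mp hzz) ▸ hz)⟩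
          refine h1.trans (SimpleGraph.Adj.reachable ?_)
          simp only [SimpleGraph.comap_adj, Function.Embedding.coe_subtype]
          exact hxa.symm
        · have hbB' : b ∈ B \ {w} :=
            ⟨hbB, fun h => hqw ((Set.mem_singleton_iff.mp h) ▸ q.end_mem_support)⟩
          have h1 : (G.induce (B \ {w})).Reachable ⟨y, hy⟩ ⟨b, hbB'⟩ := by
            refine reach_induce q (fun z hz => ?_) _ _
            exact ⟨hsuppB z (hqsub z hz), fun hzz => hqw ((Set.mem_singleton_iff.mp hzz) ▸ hz)⟩
          refine h1.trans (SimpleGraph.Adj.reachable ?_)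
          simp only [SimpleGraph.comap_adj, Function.Embedding.coe_subtype]
          exact hxb.symm

section Fin
variable [Fintype V]

/-- P3: in a block graph, every biconnected set of size at least 2 is a clique. -/
lemma biconn_clique (hbg : IsBlockGraph G) {B : Set V} (h2 : 2 ≤ B.ncard)
    (hB : IsBiconnectedSet G B) : G.IsClique B := by
  classical
  set s : Finset (Finset V) :=
    Finset.univ.filter (fun F => B ⊆ ↑F ∧ IsBiconnectedSet G ↑F) with hs
  have hBs : B.toFinset ∈ s := by
    simp only [hs, Finset.mem_filter, Finset.mem_univ, true_and, Set.coe_toFinset]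
    exact ⟨le_refl _, hB⟩
  obtain ⟨F, hFs, hmax⟩ := Finset.exists_max_image s Finset.card ⟨_, hBs⟩
  rw [hs, Finset.mem_filter] at hFs
  obtain ⟨-, hBF, hFbi⟩ := hFs
  have hFfin : (↑F : Set V).Finite := F.finite_toSet
  have hblock : IsBlock G ↑F := by
    refine ⟨le_trans h2 (Set.ncard_le_ncard hBF hFfin), hFbi, ?_⟩
    intro B' hFB' h2' hB'bi
    have hB's : B'.toFinset ∈ s := by
      simp only [hs, Finset.mem_filter, Finset.mem_univ, true_and, Set.coe_toFinset]
      exact ⟨hBF.trans hFB', hB'bi⟩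
    have hcard := hmax _ hB's
    have : B'.ncard ≤ (↑F : Set V).ncard := by
      rwa [Set.ncard_coe_finset, Set.ncard_eq_toFinset_card' B']
    exact (Set.eq_of_subset_of_ncard_le hFB' this (Set.toFinite _)).symm
  exact (hbg.2 _ hblock).subset hBF

/-- Lemma A auxiliary: no separating vertex between two distinct nonadjacent
vertices is impossible in a block graph. -/
lemma lemA_aux (hbg : IsBlockGraph G) :
    ∀ n : ℕ, ∀ a b : V, a ≠ b → ¬ G.Adj a b →
      (∀ v, v ≠ a → v ≠ b → (Gv G v).Reachable a b) → G.dist a b ≤ n → False := by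
  have hG := hbg.1
  intro n
  induction n with
  | zero =>
    intro a b hab _ _ hd
    exact hab (hG.dist_eq_zero_iff.mp (Nat.le_zero.mp hd))
  | succ n ih =>
    intro a b hab hnadj hmain hd
    obtain ⟨p, hp, hplen⟩ := hG.exists_path_of_dist a b
    cases p with
    | nil => exact hab rfl
    | @cons _ x _ h q =>
      have hq : q.IsPath ∧ a ∉ q.support := by
        rw [SimpleGraph.Walk.cons_isPath_iff] at hp
        exact hp
      by_cases hxb : x = b
      · exact hnadj (hxb ▸ h)
      by_cases hadjxb : G.Adj x b
      · -- base case: build theta and contradict clique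
        have hxa : x ≠ a := h.ne'
        have hreach : (Gv G x).Reachable a b := hmain x hxa hxb
        obtain ⟨r, hr, hxr⟩ := exists_path_avoiding hreach (Ne.symm hxa)
        have hbi := theta_biconn r hr hxr h.symm hadjxb
        have hcard : 2 ≤ (insert x {y | y ∈ r.support} : Set V).ncard := by
          rw [show (2:ℕ) = 1 + 1 from rfl, Nat.add_one_le_iff, Set.one_lt_ncard_iff (Set.toFinite _)]
          exact ⟨x, a, Set.mem_insert _ _,
            Set.mem_insert_of_mem _ r.start_mem_support, hxa⟩
        have hclq := biconn_clique hbg hcard hbi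
        exact hnadj ((hclq (Set.mem_insert_of_mem _ r.start_mem_support)
          (Set.mem_insert_of_mem _ r.end_mem_support) hab))
      · -- recurse on (x, b)
        refine ih x b hxb hadjxb ?_ ?_
        · intro v hvx hvb
          by_cases hva : v = a
          · subst hva
            exact reach_del_of_walk q hq.2
          · have h1 : (Gv G v).Reachable a b := hmain v (Ne.symm (by exact fun hh => hva hh.symm)) hvb
            have h2 : (Gv G v).Adj a x := by
              rw [SimpleGraph.deleteEdges_adj]
              refine ⟨h, ?_⟩
              rw [Set.mem_setOf_eq, Sym2.mem_iff]
              rintro (rfl | rfl)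
              · exact hva rfl
              · exact hvx rfl
            exact h2.reachable.symm.trans h1
        · have : G.dist x b ≤ q.length := SimpleGraph.dist_le q
          have hlen : q.length + 1 = G.dist a b := by
            simpa [SimpleGraph.Walk.length_cons] using hplen
          omega

end Fin

section Fin2
variable [Fintype V]

/-- Lemma A: in a block graph, two distinct nonadjacent vertices are separated
by some vertex. -/
lemma exists_sep (hbg : IsBlockGraph G) {a b : V} (hab : a ≠ b) (hnadj : ¬ G.Adj a b) :
    ∃ v, v ≠ a ∧ v ≠ b ∧ ¬ (Gv G v).Reachable a b := by
  by_contra hcon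
  push_neg at hcon
  exact lemA_aux hbg (G.dist a b) a b hab hnadj
    (fun v hva hvb => hcon v hva hvb) le_rfl

/-- L3: a separator of two vertices of `W = S ∪ C` belongs to `W`. -/
lemma sep_mem_W (hG : G.Connected) (S : Finset V) {a b v : V}
    (ha : a ∈ (↑S : Set V) ∪ {u | u ∉ S ∧ ∃ s1 ∈ S, ∃ s2 ∈ S, ¬ (Gv G u).Reachable s1 s2})
    (hb : b ∈ (↑S : Set V) ∪ {u | u ∉ S ∧ ∃ s1 ∈ S, ∃ s2 ∈ S, ¬ (Gv G u).Reachable s1 s2})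
    (hva : v ≠ a) (hvb : v ≠ b) (hsep : ¬ (Gv G v).Reachable a b) :
    v ∈ (↑S : Set V) ∪ {u | u ∉ S ∧ ∃ s1 ∈ S, ∃ s2 ∈ S, ¬ (Gv G u).Reachable s1 s2} := by
  have hA : ∃ s1 ∈ S, (Gv G v).Reachable a s1 := by
    rcases ha with ha | ⟨-, s1, hs1, s2, hs2, hsepa⟩
    · exact ⟨a, ha, SimpleGraph.Reachable.refl _⟩
    · rcases reach_del_of_sep hG hsepa hva with h | h
      · exact ⟨s1, hs1, h.symm⟩
      · exact ⟨s2, hs2, h.symm⟩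
  have hB : ∃ s2 ∈ S, (Gv G v).Reachable b s2 := by
    rcases hb with hb | ⟨-, s1, hs1, s2, hs2, hsepb⟩
    · exact ⟨b, hb, SimpleGraph.Reachable.refl _⟩
    · rcases reach_del_of_sep hG hsepb hvb with h | h
      · exact ⟨s1, hs1, h.symm⟩
      · exact ⟨s2, hs2, h.symm⟩
  obtain ⟨s1, hs1, hr1⟩ := hA
  obtain ⟨s2, hs2, hr2⟩ := hB
  by_cases hvS : v ∈ S
  · exact Or.inl hvS
  · refine Or.inr ⟨hvS, s1, hs1, s2, hs2, fun h => hsep ?_⟩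
    exact (hr1.trans (h.trans hr2.symm))

/-- L4: the induced graph on `W = S ∪ C` is connected. -/
lemma induce_W_connected (hbg : IsBlockGraph G) (S : Finset V) (hS : S.Nonempty) :
    (G.induce ((↑S : Set V) ∪
      {u | u ∉ S ∧ ∃ s1 ∈ S, ∃ s2 ∈ S, ¬ (Gv G u).Reachable s1 s2})).Connected := by
  have hG := hbg.1
  set W : Set V := (↑S : Set V) ∪
      {u | u ∉ S ∧ ∃ s1 ∈ S, ∃ s2 ∈ S, ¬ (Gv G u).Reachable s1 s2} with hW
  have key : ∀ n : ℕ, ∀ a b : V, ∀ (ha : a ∈ W) (hb : b ∈ W), G.dist a b ≤ n →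
      (G.induce W).Reachable ⟨a, ha⟩ ⟨b, hb⟩ := by
    intro n
    induction n with
    | zero =>
      intro a b ha hb hd
      have : a = b := hG.dist_eq_zero_iff.mp (Nat.le_zero.mp hd)
      subst this; rfl
    | succ n ih =>
      intro a b ha hb hd
      by_cases hab : a = b
      · subst hab; rfl
      by_cases hadj : G.Adj a b
      · exact SimpleGraph.Adj.reachable (by
          simp only [SimpleGraph.comap_adj, Function.Embedding.coe_subtype]; exact hadj)
      obtain ⟨v, hva, hvb, hsep⟩ := exists_sep hbg hab hadj
      have hvW : v ∈ W := sep_mem_W hG S ha hb hva hvb hsep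
      obtain ⟨p, hp, hplen⟩ := hG.exists_path_of_dist a b
      have hvp : v ∈ p.support := by
        by_contra hvp
        exact hsep (reach_del_of_walk p hvp)
      have h1 : G.dist a v ≤ (p.takeUntil v hvp).length := SimpleGraph.dist_le _
      have h2 : G.dist v b ≤ (p.dropUntil v hvp).length := SimpleGraph.dist_le _
      have hsum : (p.takeUntil v hvp).length + (p.dropUntil v hvp).length = p.length := by
        rw [← SimpleGraph.Walk.length_append, p.take_spec hvp]
      have hpos1 : 0 < G.dist a v := hG.pos_dist_of_ne (Ne.symm hva)
      have hpos2 : 0 < G.dist v b := hG.pos_dist_of_ne hvb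
      have hd1 : G.dist a v ≤ n := by omega
      have hd2 : G.dist v b ≤ n := by omega
      exact (ih a v ha hvW hd1).trans (ih v b hvW hb hd2)
  rw [SimpleGraph.connected_iff]
  refine ⟨fun u v => ?_, ?_⟩
  · have := key (G.dist u.1 v.1) u.1 v.1 u.2 v.2 le_rfl
    exact this
  · obtain ⟨s, hs⟩ := hS
    exact ⟨⟨s, Or.inl hs⟩⟩

end Fin2

section Trees
variable [Fintype V]

/-- Every finite connected graph has a spanning tree. -/
lemma exists_spanning_tree :
    ∀ n : ℕ, ∀ G : SimpleGraph V, G.edgeSet.ncard ≤ n → G.Connected →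
      ∃ T : SimpleGraph V, T ≤ G ∧ T.IsTree := by
  intro n
  induction n with
  | zero =>
    intro G hcard hG
    by_cases hac : G.IsAcyclic
    · exact ⟨G, le_rfl, hG, hac⟩
    · exfalso
      unfold SimpleGraph.IsAcyclic at hac
      push_neg at hac
      obtain ⟨u, c, hc⟩ := hac
      have h3 : 3 ≤ c.length := hc.three_le_length
      have hlen : 0 < c.edges.length := by
        rw [SimpleGraph.Walk.length_edges]; omega
      obtain ⟨e, he⟩ := List.exists_mem_of_length_pos hlen
      have hemem : e ∈ G.edgeSet := c.edges_subset_edgeSet he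
      have : 0 < G.edgeSet.ncard := by
        rw [Set.ncard_pos (Set.toFinite _)]
        exact ⟨e, hemem⟩
      omega
  | succ n ih =>
    intro G hcard hG
    by_cases hac : G.IsAcyclic
    · exact ⟨G, le_rfl, hG, hac⟩
    · unfold SimpleGraph.IsAcyclic at hac
      push_neg at hac
      obtain ⟨u, c, hc⟩ := hac
      have h3 : 3 ≤ c.length := hc.three_le_length
      have hlen : 0 < c.edges.length := by
        rw [SimpleGraph.Walk.length_edges]; omega
      obtain ⟨e, he⟩ := List.exists_mem_of_length_pos hlen
      revert he
      induction e using Sym2.ind with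
      | _ v w =>
      intro he
      have hemem : s(v, w) ∈ G.edgeSet := c.edges_subset_edgeSet he
      set G' : SimpleGraph V := G \ SimpleGraph.fromEdgeSet {s(v, w)} with hG'
      have hrw : G'.Reachable v w :=
        (SimpleGraph.adj_and_reachable_delete_edges_iff_exists_cycle.mpr ⟨u, c, hc, he⟩).2
      have hle : G' ≤ G := sdiff_le
      have hwalk : ∀ a b : V, ∀ _ : G.Walk a b, G'.Reachable a b := by
        intro a b p
        induction p with
        | nil => rfl
        | @cons a' c' b' h q ihw =>
          refine SimpleGraph.Reachable.trans ?_ ihw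
          by_cases hcase : s(a', c') = s(v, w)
          · rw [Sym2.eq_iff] at hcase
            rcases hcase with ⟨rfl, rfl⟩ | ⟨rfl, rfl⟩
            · exact hrw
            · exact hrw.symm
          · refine SimpleGraph.Adj.reachable ?_
            rw [hG', SimpleGraph.sdiff_adj]
            refine ⟨h, ?_⟩
            rw [SimpleGraph.fromEdgeSet_adj]
            rintro ⟨h1, -⟩
            exact hcase (Set.mem_singleton_iff.mp h1)
      have hG'conn : G'.Connected := by
        rw [SimpleGraph.connected_iff]
        refine ⟨fun a b => ?_, hG.nonempty⟩
        obtain ⟨p⟩ := hG.preconnected a b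
        exact hwalk a b p
      have hedge : G'.edgeSet = G.edgeSet \ {s(v, w)} := by
        rw [hG']
        exact SimpleGraph.edgeSet_deleteEdges {s(v, w)}
      have hlt : G'.edgeSet.ncard < G.edgeSet.ncard := by
        rw [hedge]
        exact Set.ncard_diff_singleton_lt_of_mem hemem (Set.toFinite _)
      obtain ⟨T, hT1, hT2⟩ := ih G' (by omega) hG'conn
      exact ⟨T, hT1.trans hle, hT2⟩

/-- A finite connected graph has at least `n - 1` edges. -/
lemma card_le_ncard_edges_add_one (G : SimpleGraph V) (hG : G.Connected) :
    Fintype.card V ≤ G.edgeSet.ncard + 1 := by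
  obtain ⟨T, hTG, hT⟩ := exists_spanning_tree G.edgeSet.ncard G le_rfl hG
  have h1 : T.edgeFinset.card + 1 = Fintype.card V := hT.card_edgeFinset
  have h2 : T.edgeSet.ncard = T.edgeFinset.card := by
    rw [Set.ncard_eq_toFinset_card' T.edgeSet]; congr
  have h3 : T.edgeSet.ncard ≤ G.edgeSet.ncard :=
    Set.ncard_le_ncard (SimpleGraph.edgeSet_mono hTG) (Set.toFinite _)
  omega

/-- Lower bound for connected subgraphs. -/
lemma subgraph_verts_le (H : G.Subgraph) (hH : H.Connected) :
    H.verts.ncard ≤ H.edgeSet.ncard + 1 := by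
  have h1 : Fintype.card ↥H.verts ≤ H.coe.edgeSet.ncard + 1 :=
    card_le_ncard_edges_add_one H.coe hH.coe
  have h2 : H.coe.edgeSet.ncard ≤ H.edgeSet.ncard := by
    refine Set.ncard_le_ncard_of_injOn (Sym2.map Subtype.val) ?_ ?_ (Set.toFinite _)
    · intro e hee
      revert hee
      induction e using Sym2.ind with
      | _ x y =>
      intro hee
      rw [Sym2.map_pair_eq, SimpleGraph.Subgraph.mem_edgeSet]
      rw [SimpleGraph.mem_edgeSet] at hee
      exact hee
    · exact (Sym2.map.injective Subtype.val_injective).injOn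
  have h3 : H.verts.ncard = Fintype.card ↥H.verts := by
    rw [Set.ncard_eq_toFinset_card' H.verts, Set.toFinset_card]
  omega

/-- The subgraph induced by a graph on the subtype of a finset. -/
private def treeSub (F : Finset V) (T : SimpleGraph ↥(↑F : Set V))
    (hTle : T ≤ G.induce (↑F : Set V)) : G.Subgraph where
  verts := (↑F : Set V)
  Adj := fun a b => ∃ (ha : a ∈ (↑F : Set V)) (hb : b ∈ (↑F : Set V)), T.Adj ⟨a, ha⟩ ⟨b, hb⟩
  adj_sub := by rintro a b ⟨ha, hb, hTab⟩; simpa using hTle hTab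
  edge_vert := by rintro a b ⟨ha, hb, -⟩; exact ha
  symm := ⟨by rintro a b ⟨ha, hb, hTab⟩; exact ⟨hb, ha, hTab.symm⟩⟩

/-- Upper bound: from a connected induced subgraph, build a tree subgraph. -/
lemma exists_tree_subgraph (F : Finset V) (hconn : (G.induce (↑F : Set V)).Connected) :
    ∃ H : G.Subgraph, H.Connected ∧ H.verts = (↑F : Set V) ∧
      H.edgeSet.ncard = F.card - 1 := by
  obtain ⟨T, hTle, hT⟩ :=
    exists_spanning_tree (G.induce (↑F : Set V)).edgeSet.ncard _ le_rfl hconn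
  refine ⟨treeSub F T hTle, ?_, rfl, ?_⟩
  · rw [SimpleGraph.Subgraph.connected_iff']
    refine (hT.isConnected).mono ?_
    intro x y hxy
    exact ⟨x.2, y.2, hxy⟩
  · have himg : (treeSub F T hTle).edgeSet = Sym2.map Subtype.val '' T.edgeSet := by
      ext e
      induction e using Sym2.ind with
      | _ a b =>
      rw [SimpleGraph.Subgraph.mem_edgeSet]
      constructor
      · rintro ⟨ha, hb, hTab⟩
        exact ⟨s(⟨a, ha⟩, ⟨b, hb⟩), hTab, by rw [Sym2.map_pair_eq]⟩
      · rintro ⟨e', he', heq⟩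
        revert he' heq
        induction e' using Sym2.ind with
        | _ x y =>
        intro he' heq
        rw [Sym2.map_pair_eq] at heq
        rw [Sym2.eq_iff] at heq
        rcases heq with ⟨hx, hy⟩ | ⟨hx, hy⟩
        · exact ⟨hx ▸ x.2, hy ▸ y.2, by convert he' <;> simp [← hx, ← hy]⟩
        · exact ⟨hy ▸ y.2, hx ▸ x.2, by convert he'.symm <;> simp [← hx, ← hy]⟩
    rw [himg, Set.ncard_image_of_injective _ (Sym2.map.injective Subtype.val_injective)]
    have h2 : T.edgeSet.ncard = T.edgeFinset.card := by
      rw [Set.ncard_eq_toFinset_card' T.edgeSet]; congr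
    have h3 : T.edgeFinset.card + 1 = Fintype.card ↥(↑F : Set V) := hT.card_edgeFinset
    have h4 : Fintype.card ↥(↑F : Set V) = F.card := by
      rw [← Set.toFinset_card, Finset.toFinset_coe]
    omega

end Trees

section PerS
variable [Fintype V]

/-- The Steiner distance formula for block graphs. -/
lemma perS (hbg : IsBlockGraph G) (S : Finset V) (hS : S.Nonempty) :
    steinerDist G (↑S : Set V) = (S.card - 1) +
      (Finset.univ.filter (fun v => v ∉ S ∧ ∃ a ∈ S, ∃ b ∈ S,
        ¬ (G.deleteEdges {e | v ∈ e}).Reachable a b)).card := by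
  classical
  set Cs : Finset V := Finset.univ.filter (fun v => v ∉ S ∧ ∃ a ∈ S, ∃ b ∈ S,
        ¬ (G.deleteEdges {e | v ∈ e}).Reachable a b) with hCs
  set F : Finset V := S ∪ Cs with hF
  have hdisj : Disjoint S Cs := by
    rw [Finset.disjoint_left]
    intro v hv hvc
    rw [hCs, Finset.mem_filter] at hvc
    exact hvc.2.1 hv
  have hWeq : (↑F : Set V) = (↑S : Set V) ∪
      {u | u ∉ S ∧ ∃ s1 ∈ S, ∃ s2 ∈ S, ¬ (Gv G u).Reachable s1 s2} := by
    rw [hF, Finset.coe_union]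
    congr 1
    ext u
    simp [hCs]
  have hconn : (G.induce (↑F : Set V)).Connected := by
    rw [hWeq]; exact induce_W_connected hbg S hS
  obtain ⟨H0, hH0c, hH0v, hH0e⟩ := exists_tree_subgraph F hconn
  have hSsubF : (↑S : Set V) ⊆ (↑F : Set V) := by
    rw [hF]; exact_mod_cast Finset.subset_union_left
  have hmem : (F.card - 1) ∈ {m | ∃ H : G.Subgraph, H.Connected ∧
      (↑S : Set V) ⊆ H.verts ∧ H.edgeSet.ncard = m} :=
    ⟨H0, hH0c, by rw [hH0v]; exact hSsubF, hH0e⟩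
  have hlow : ∀ m ∈ {m | ∃ H : G.Subgraph, H.Connected ∧
      (↑S : Set V) ⊆ H.verts ∧ H.edgeSet.ncard = m}, F.card - 1 ≤ m := by
    rintro m ⟨H, hHc, hHS, rfl⟩
    have hCsub : (↑F : Set V) ⊆ H.verts := by
      rw [hF, Finset.coe_union]
      rintro x (hx | hx)
      · exact hHS hx
      · rw [Finset.mem_coe, hCs, Finset.mem_filter] at hx
        obtain ⟨-, hnx, a, haS, b, hbS, hsep⟩ := hx
        by_contra hxv
        have haH : a ∈ H.verts := hHS haS
        have hbH : b ∈ H.verts := hHS hbS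
        obtain ⟨p⟩ := (SimpleGraph.Subgraph.connected_iff'.mp hHc).preconnected
          ⟨a, haH⟩ ⟨b, hbH⟩
        refine hsep (?_ : (Gv G x).Reachable (H.hom ⟨a, haH⟩) (H.hom ⟨b, hbH⟩))
        refine reach_del_of_walk (p.map H.hom) ?_
        rw [SimpleGraph.Walk.support_map]
        intro hmem'
        obtain ⟨z, hz, hzx⟩ := List.mem_map.mp hmem'
        apply hxv
        rw [← hzx]
        exact z.2
    have h1 : F.card ≤ H.verts.ncard := by
      have := Set.ncard_le_ncard hCsub (Set.toFinite _)
      rwa [Set.ncard_coe_finset] at this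
    have h2 := subgraph_verts_le H hHc
    omega
  have hdist : steinerDist G (↑S : Set V) = F.card - 1 := by
    unfold steinerDist
    exact le_antisymm (Nat.sInf_le hmem) (le_csInf ⟨_, hmem⟩ hlow)
  have hcard : F.card = S.card + Cs.card := by
    rw [hF]; exact Finset.card_union_of_disjoint hdisj
  have h1S : 1 ≤ S.card := Finset.card_pos.mpr hS
  rw [hdist, hcard]
  omega

end PerS

end Lemmas

/-- Vertex decomposition of the Steiner k-Wiener index of a block graph. -/
theorem stmt8 {V : Type*} [Fintype V] (G : SimpleGraph V) (hbg : IsBlockGraph G)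
    (k : ℕ) (hk : 2 ≤ k) (hk' : k ≤ Fintype.card V) :
    steinerWiener G k =
      (∑ v ∈ Finset.univ.filter (fun v => IsCutVertex G v),
        {S : Finset V | S.card = k ∧ v ∉ S ∧ ∃ a ∈ S, ∃ b ∈ S,
          ¬ (G.deleteEdges {e | v ∈ e}).Reachable a b}.ncard)
      + (k - 1) * (Fintype.card V).choose k := by
  classical
  have hG := hbg.1
  have hterm : ∀ S ∈ Finset.powersetCard k (Finset.univ : Finset V),
      steinerDist G (↑S : Set V) = (k - 1) +
        (Finset.univ.filter (fun v => v ∉ S ∧ ∃ a ∈ S, ∃ b ∈ S,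
          ¬ (G.deleteEdges {e | v ∈ e}).Reachable a b)).card := by
    intro S hSm
    rw [Finset.mem_powersetCard] at hSm
    have hcard : S.card = k := hSm.2
    have hne : S.Nonempty := by rw [← Finset.card_pos, hcard]; omega
    rw [perS hbg S hne, hcard]
  rw [steinerWiener, Finset.sum_congr rfl hterm, Finset.sum_add_distrib]
  have hconst : (∑ _S ∈ Finset.powersetCard k (Finset.univ : Finset V), (k-1))
      = (k - 1) * (Fintype.card V).choose k := by
    rw [Finset.sum_const, Finset.card_powersetCard, Finset.card_univ, smul_eq_mul, mul_comm]
  have hA : ∀ v : V, {S : Finset V | S.card = k ∧ v ∉ S ∧ ∃ a ∈ S, ∃ b ∈ S,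
      ¬ (G.deleteEdges {e | v ∈ e}).Reachable a b}.ncard =
      ((Finset.powersetCard k (Finset.univ : Finset V)).filter
        (fun S => v ∉ S ∧ ∃ a ∈ S, ∃ b ∈ S,
          ¬ (G.deleteEdges {e | v ∈ e}).Reachable a b)).card := by
    intro v
    rw [show {S : Finset V | S.card = k ∧ v ∉ S ∧ ∃ a ∈ S, ∃ b ∈ S,
        ¬ (G.deleteEdges {e | v ∈ e}).Reachable a b} =
        ↑((Finset.powersetCard k (Finset.univ : Finset V)).filter
        (fun S => v ∉ S ∧ ∃ a ∈ S, ∃ b ∈ S,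
          ¬ (G.deleteEdges {e | v ∈ e}).Reachable a b)) from by
      ext S
      simp only [Set.mem_setOf_eq, Finset.coe_filter, Finset.mem_powersetCard,
        Finset.subset_univ, true_and]]
    rw [Set.ncard_coe_finset]
  have hswap : (∑ S ∈ Finset.powersetCard k (Finset.univ : Finset V),
      (Finset.univ.filter (fun v => v ∉ S ∧ ∃ a ∈ S, ∃ b ∈ S,
        ¬ (G.deleteEdges {e | v ∈ e}).Reachable a b)).card)
      = ∑ v ∈ Finset.univ.filter (fun v => IsCutVertex G v),
        {S : Finset V | S.card = k ∧ v ∉ S ∧ ∃ a ∈ S, ∃ b ∈ S,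
          ¬ (G.deleteEdges {e | v ∈ e}).Reachable a b}.ncard := by
    have h1 : ∀ S : Finset V, (Finset.univ.filter (fun v => v ∉ S ∧ ∃ a ∈ S, ∃ b ∈ S,
        ¬ (G.deleteEdges {e | v ∈ e}).Reachable a b)).card
        = ∑ v ∈ (Finset.univ : Finset V), (if v ∉ S ∧ ∃ a ∈ S, ∃ b ∈ S,
          ¬ (G.deleteEdges {e | v ∈ e}).Reachable a b then 1 else 0) := by
      intro S
      rw [Finset.card_filter]
    simp_rw [h1]
    rw [Finset.sum_comm]
    have h2 : ∀ v : V, (∑ S ∈ Finset.powersetCard k (Finset.univ : Finset V),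
        (if v ∉ S ∧ ∃ a ∈ S, ∃ b ∈ S,
          ¬ (G.deleteEdges {e | v ∈ e}).Reachable a b then 1 else 0))
        = ((Finset.powersetCard k (Finset.univ : Finset V)).filter
          (fun S => v ∉ S ∧ ∃ a ∈ S, ∃ b ∈ S,
            ¬ (G.deleteEdges {e | v ∈ e}).Reachable a b)).card := by
      intro v
      rw [Finset.card_filter]
    simp_rw [h2, hA]
    refine (Finset.sum_subset (Finset.filter_subset _ _) ?_).symm
    intro v _ hnot
    rw [Finset.mem_filter] at hnot
    push_neg at hnot
    have hnc : ¬ IsCutVertex G v := hnot (Finset.mem_univ v)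
    rw [Finset.card_eq_zero, Finset.filter_eq_empty_iff]
    rintro S _ ⟨hvS, a, haS, b, hbS, hsep⟩
    have hva : v ≠ a := fun h => hvS (h ▸ haS)
    have hvb : v ≠ b := fun h => hvS (h ▸ hbS)
    exact hnc (isCutVertex_of_sep hG hsep hva hvb)
  rw [hconst, hswap]
  exact add_comm _ _
end

section
/- Let G be a star-like block graph on n vertices with blocks B_1,…,B_t of orders b_1,…,b_t, and let 2 ≤ k ≤ n. Then SW_k(G) = (n−1)·C(n−1,k−1) − ∑_{i=1}^t C(b_i − 1, k). -/
open SimpleGraph Finset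
open scoped Classical

lemma aux_induce_conn_of_universal {V : Type*} (G : SimpleGraph V) {s : Set V} {v : V}
    (hv : v ∈ s) (huniv : ∀ u ∈ s, u ≠ v → G.Adj v u) : (G.induce s).Connected := by
  rw [connected_iff]
  refine ⟨?_, ⟨⟨v, hv⟩⟩⟩
  have key : ∀ x : s, (G.induce s).Reachable x ⟨v, hv⟩ := by
    rintro ⟨x, hx⟩
    by_cases hxv : x = v
    · subst hxv; exact Reachable.refl _
    · exact Adj.reachable (by exact (huniv x hx hxv).symm)
  intro x y
  exact (key x).trans (key y).symm

lemma aux_clique_induce_conn {V : Type*} (G : SimpleGraph V) {s : Set V}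
    (hc : G.IsClique s) (hne : s.Nonempty) : (G.induce s).Connected := by
  obtain ⟨v, hv⟩ := hne
  exact aux_induce_conn_of_universal G hv (fun u hu hne => hc hv hu (Ne.symm hne))

lemma aux_clique_biconn {V : Type*} (G : SimpleGraph V) {s : Set V}
    (hc : G.IsClique s) (hne : s.Nonempty) : IsBiconnectedSet G s := by
  refine ⟨aux_clique_induce_conn G hc hne, fun w _ hne' => ?_⟩
  exact aux_clique_induce_conn G (hc.subset Set.diff_subset) hne'

section
variable {V : Type*} [Fintype V] {G : SimpleGraph V}

lemma aux_exists_block {s : Set V} (h2 : 2 ≤ s.ncard) (hbi : IsBiconnectedSet G s) :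
    ∃ B, IsBlock G B ∧ s ⊆ B := by
  set 𝒮 : Finset (Set V) :=
    Finset.univ.filter (fun B : Set V => s ⊆ B ∧ IsBiconnectedSet G B) with h𝒮
  have hsmem : s ∈ 𝒮 := by simp [h𝒮, hbi]
  obtain ⟨B, hBmem, hBmax⟩ := 𝒮.exists_max_image Set.ncard ⟨s, hsmem⟩
  rw [h𝒮, Finset.mem_filter] at hBmem
  refine ⟨B, ⟨le_trans h2 (Set.ncard_le_ncard hBmem.2.1 (Set.toFinite _)), hBmem.2.2, ?_⟩,
    hBmem.2.1⟩
  intro B' hsub _ hbi'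
  have hB'mem : B' ∈ 𝒮 := by
    simp only [h𝒮, Finset.mem_filter, Finset.mem_univ, true_and]
    exact ⟨hBmem.2.1.trans hsub, hbi'⟩
  have := hBmax B' hB'mem
  exact (Set.eq_of_subset_of_ncard_le hsub this (Set.toFinite _)).symm

variable {v : V} (huniv : ∀ u : V, u ≠ v → G.Adj v u)

include huniv in
lemma aux_v_mem_block {B : Set V} (hB : IsBlock G B) : v ∈ B := by
  by_contra hv
  have hbi : IsBiconnectedSet G (insert v B) := by
    constructor
    · exact aux_induce_conn_of_universal G (Set.mem_insert v B)
        (fun u _ hu => huniv u hu)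
    · intro w _ hne
      by_cases hwv : w = v
      · subst hwv
        rw [Set.insert_diff_self_of_notMem hv]
        exact hB.2.1.1
      · exact aux_induce_conn_of_universal G
          ⟨Set.mem_insert v B, (by simp [Ne.symm hwv])⟩
          (fun u hu hune => huniv u hune)
  have h2 : 2 ≤ (insert v B).ncard :=
    le_trans hB.1 (Set.ncard_le_ncard (Set.subset_insert v B) (Set.toFinite _))
  have := hB.2.2 (insert v B) (Set.subset_insert v B) h2 hbi
  exact hv (this ▸ Set.mem_insert v B)

include huniv in
lemma aux_blocks_eq {B C : Set V} (hB : IsBlock G B) (hC : IsBlock G C)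
    (hcB : G.IsClique B) (hcC : G.IsClique C)
    {u : V} (hu : u ≠ v) (huB : u ∈ B) (huC : u ∈ C) : B = C := by
  have hvB : v ∈ B := aux_v_mem_block huniv hB
  have hvC : v ∈ C := aux_v_mem_block huniv hC
  have hbi : IsBiconnectedSet G (B ∪ C) := by
    constructor
    · exact induce_union_connected hB.2.1.1.preconnected hC.2.1.1.preconnected ⟨v, hvB, hvC⟩
    · intro w _ hne
      by_cases hwv : w = v
      · subst hwv
        rw [Set.union_diff_distrib]
        refine induce_union_connected ?_ ?_ ⟨u, ⟨huB, hu⟩, ⟨huC, hu⟩⟩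
        · exact (aux_clique_induce_conn G (s := B \ {w}) (hcB.subset Set.diff_subset) ⟨u, huB, hu⟩).preconnected
        · exact (aux_clique_induce_conn G (s := C \ {w}) (hcC.subset Set.diff_subset) ⟨u, huC, hu⟩).preconnected
      · exact aux_induce_conn_of_universal G
          ⟨Or.inl hvB, (by simp [Ne.symm hwv])⟩
          (fun x hx hxv => huniv x hxv)
  have h2 : 2 ≤ (B ∪ C).ncard :=
    le_trans hB.1 (Set.ncard_le_ncard Set.subset_union_left (Set.toFinite _))
  have hun : B ∪ C = B := hB.2.2 (B ∪ C) Set.subset_union_left h2 hbi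
  have hCB : C ⊆ B := by rw [← hun]; exact Set.subset_union_right
  exact hC.2.2 B hCB hB.1 hB.2.1

include huniv in
lemma aux_edge_block (hclique : ∀ B : Set V, IsBlock G B → G.IsClique B)
    {B : Set V} (hB : IsBlock G B) {x y : V} (hx : x ≠ v) (hy : y ≠ v)
    (hxy : G.Adj x y) (hxB : x ∈ B) : y ∈ B := by
  have hcl : G.IsClique {v, x, y} := by
    intro a ha b hb hab
    simp only [Set.mem_insert_iff, Set.mem_singleton_iff] at ha hb
    rcases ha with rfl | rfl | rfl <;> rcases hb with rfl | rfl | rfl <;>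
      first
        | exact absurd rfl hab
        | exact huniv _ hx
        | exact huniv _ hy
        | exact (huniv _ hx).symm
        | exact (huniv _ hy).symm
        | exact hxy
        | exact hxy.symm
  have h2 : 2 ≤ ({v, x, y} : Set V).ncard := by
    have hp : ({v, x} : Set V).ncard = 2 := Set.ncard_pair (Ne.symm hx)
    have hsub : ({v, x} : Set V) ⊆ {v, x, y} := by
      intro a ha
      simp only [Set.mem_insert_iff, Set.mem_singleton_iff] at ha ⊢
      tauto
    calc 2 = ({v, x} : Set V).ncard := hp.symm
      _ ≤ _ := Set.ncard_le_ncard hsub (Set.toFinite _)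
  have hbi : IsBiconnectedSet G {v, x, y} :=
    aux_clique_biconn G hcl ⟨v, Set.mem_insert _ _⟩
  obtain ⟨D, hD, hsubD⟩ := aux_exists_block h2 hbi
  have hxD : x ∈ D := hsubD (by simp)
  have hyD : y ∈ D := hsubD (by simp)
  have hDB : D = B :=
    aux_blocks_eq huniv hD hB (hclique _ hD) (hclique _ hB) hx hxD hxB
  exact hDB ▸ hyD

include huniv in
lemma aux_walk_sep (hclique : ∀ B : Set V, IsBlock G B → G.IsClique B)
    {B : Set V} (hB : IsBlock G B) {x y : V} (p : G.Walk x y) :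
    x ∈ B → x ≠ v → y ∉ B → v ∈ p.support := by
  induction p with
  | nil => intro hx _ hy; exact absurd hx hy
  | @cons a b c h p ih =>
    intro hx hxv hy
    rw [SimpleGraph.Walk.support_cons]
    by_cases hbv : b = v
    · subst hbv; exact List.mem_cons_of_mem _ p.start_mem_support
    · have hbB : b ∈ B := aux_edge_block huniv hclique hB hxv hbv h hx
      exact List.mem_cons_of_mem _ (ih hbB hbv hy)

end

lemma aux_card_le_edges {W : Type*} [Fintype W] {G : SimpleGraph W} (h : G.Connected) :
    Fintype.card W ≤ G.edgeSet.ncard + 1 := by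
  have hne : Nonempty W := h.nonempty
  obtain ⟨r⟩ := hne
  have key : ∀ w : W, ∃ u, w ≠ r → G.Adj w u ∧ G.dist r u < G.dist r w := by
    intro w
    by_cases hw : w = r
    · exact ⟨r, fun h' => absurd hw h'⟩
    · obtain ⟨p, hp⟩ := h.exists_walk_length_eq_dist r w
      have hd : 0 < G.dist r w := h.pos_dist_of_ne (Ne.symm hw)
      have hnil : ¬ p.reverse.Nil := by
        rw [SimpleGraph.Walk.nil_iff_length_eq]
        rw [SimpleGraph.Walk.length_reverse, hp]
        omega
      obtain ⟨u, hadj, q, hq⟩ := SimpleGraph.Walk.not_nil_iff.mp hnil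
      refine ⟨u, fun _ => ⟨hadj, ?_⟩⟩
      have hlen : q.length + 1 = G.dist r w := by
        have := congrArg SimpleGraph.Walk.length hq
        rw [SimpleGraph.Walk.length_reverse, hp] at this
        simp [SimpleGraph.Walk.length_cons] at this
        omega
      calc G.dist r u ≤ q.reverse.length := SimpleGraph.dist_le q.reverse
        _ = q.length := SimpleGraph.Walk.length_reverse q
        _ < G.dist r w := by omega
  choose f hf using key
  have hle : (Finset.univ.erase r).card ≤ G.edgeFinset.card := by
    apply Finset.card_le_card_of_injOn (fun w => s(w, f w))
    · intro w hw
      rw [Finset.mem_coe, Finset.mem_erase] at hw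
      rw [Finset.mem_coe, SimpleGraph.mem_edgeFinset, SimpleGraph.mem_edgeSet]
      exact (hf w hw.1).1
    · intro a ha b hb hab
      rw [Finset.coe_erase, Set.mem_diff] at ha hb
      have ha' := hf a (by simpa using ha.2)
      have hb' := hf b (by simpa using hb.2)
      rw [Sym2.eq_iff] at hab
      rcases hab with ⟨h1, _⟩ | ⟨h1, h2⟩
      · exact h1
      · have hda := ha'.2
        have hdb := hb'.2
        rw [h2] at hda
        rw [← h1] at hdb
        omega
  have h1 : (Finset.univ.erase r).card = Fintype.card W - 1 := by
    rw [Finset.card_erase_of_mem (Finset.mem_univ r), Finset.card_univ]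
  have hpos : 0 < Fintype.card W := Fintype.card_pos_iff.mpr ⟨r⟩
  have h2 : G.edgeSet.ncard = G.edgeFinset.card := by
    exact (congrArg Set.ncard G.coe_edgeFinset).symm.trans (Set.ncard_coe_finset _)
  omega

lemma aux_sym2_map_inj {α β : Type*} {f : α → β} (hf : Function.Injective f) :
    Function.Injective (Sym2.map f) := Sym2.map.injective hf

lemma aux_subgraph_verts_le {V : Type*} [Fintype V] {G : SimpleGraph V} {H : G.Subgraph}
    (hc : H.Connected) : H.verts.ncard ≤ H.edgeSet.ncard + 1 := by
  have hcc : H.coe.Connected := hc.coe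
  have hcard := aux_card_le_edges hcc
  have h1 : Fintype.card H.verts = H.verts.ncard := by
    rw [Set.ncard_eq_toFinset_card', Set.toFinset_card]
  have h2 : H.coe.edgeSet.ncard = H.edgeSet.ncard := by
    rw [← H.image_coe_edgeSet_coe]
    rw [Set.ncard_image_of_injective _ (aux_sym2_map_inj Subtype.val_injective)]
  omega

/-- Star subgraph with center `c` and leaves `D`. -/
noncomputable def starSub {V : Type*} (G : SimpleGraph V) (c : V) (D : Finset V)
    (hD : ∀ u ∈ D, G.Adj c u) : G.Subgraph where
  verts := insert c ↑D
  Adj x y := (x = c ∧ y ∈ D) ∨ (y = c ∧ x ∈ D)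
  adj_sub := by
    rintro x y (⟨rfl, hy⟩ | ⟨rfl, hx⟩)
    · exact hD y hy
    · exact (hD x hx).symm
  edge_vert := by
    rintro x y (⟨rfl, hy⟩ | ⟨rfl, hx⟩)
    · exact Set.mem_insert _ _
    · exact Set.mem_insert_of_mem _ hx
  symm := by constructor; rintro x y (⟨rfl, hy⟩ | ⟨rfl, hx⟩); exact Or.inr ⟨rfl, hy⟩; exact Or.inl ⟨rfl, hx⟩

lemma starSub_connected {V : Type*} (G : SimpleGraph V) (c : V) (D : Finset V)
    (hD : ∀ u ∈ D, G.Adj c u) : (starSub G c D hD).Connected := by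
  rw [SimpleGraph.Subgraph.connected_iff]
  constructor
  · rw [SimpleGraph.Subgraph.preconnected_iff]
    have key : ∀ x : (starSub G c D hD).verts,
        (starSub G c D hD).coe.Reachable x ⟨c, Set.mem_insert _ _⟩ := by
      rintro ⟨x, hx⟩
      rcases hx with rfl | hx
      · exact Reachable.refl _
      · refine SimpleGraph.Adj.reachable ?_
        exact SimpleGraph.Subgraph.Adj.coe (Or.inr ⟨rfl, by simpa using hx⟩)
    intro x y
    exact (key x).trans (key y).symm
  · exact ⟨c, Set.mem_insert _ _⟩

lemma starSub_edgeSet {V : Type*} (G : SimpleGraph V) (c : V) (D : Finset V)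
    (hD : ∀ u ∈ D, G.Adj c u) :
    (starSub G c D hD).edgeSet = (fun u => s(c, u)) '' ↑D := by
  ext e
  induction e with
  | h x y =>
    rw [SimpleGraph.Subgraph.mem_edgeSet]
    constructor
    · rintro (⟨rfl, hy⟩ | ⟨rfl, hx⟩)
      · exact ⟨y, hy, rfl⟩
      · exact ⟨x, hx, Sym2.eq_swap⟩
    · rintro ⟨u, hu, he⟩
      rw [Sym2.eq_iff] at he
      rcases he with ⟨rfl, rfl⟩ | ⟨rfl, rfl⟩
      · exact Or.inl ⟨rfl, hu⟩
      · exact Or.inr ⟨rfl, hu⟩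

lemma starSub_edge_card {V : Type*} (G : SimpleGraph V) (c : V) (D : Finset V)
    (hD : ∀ u ∈ D, G.Adj c u) : (starSub G c D hD).edgeSet.ncard = D.card := by
  rw [starSub_edgeSet]
  rw [Set.ncard_image_of_injective _ (fun a b h => by simpa using Sym2.congr_right.mp h)]
  exact Set.ncard_coe_finset D

section
variable {V : Type*} [Fintype V] {G : SimpleGraph V}

lemma aux_steiner_lb {S : Finset V} {m : ℕ}
    (hm : m ∈ {m | ∃ H : G.Subgraph, H.Connected ∧ ↑S ⊆ H.verts ∧ H.edgeSet.ncard = m}) :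
    S.card ≤ m + 1 := by
  obtain ⟨H, hHc, hHS, rfl⟩ := hm
  have h1 : (↑S : Set V).ncard ≤ H.verts.ncard :=
    Set.ncard_le_ncard hHS (Set.toFinite _)
  rw [Set.ncard_coe_finset] at h1
  have := aux_subgraph_verts_le hHc
  omega

lemma steinerDist_eq_of_center {S : Finset V} {c : V} (hc : c ∈ S)
    (hadj : ∀ u ∈ S, u ≠ c → G.Adj c u) : steinerDist G ↑S = S.card - 1 := by
  have hD : ∀ u ∈ S.erase c, G.Adj c u := fun u hu =>
    hadj u (Finset.mem_of_mem_erase hu) (Finset.ne_of_mem_erase hu)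
  have hmem : S.card - 1 ∈
      {m | ∃ H : G.Subgraph, H.Connected ∧ ↑S ⊆ H.verts ∧ H.edgeSet.ncard = m} := by
    refine ⟨starSub G c (S.erase c) hD, starSub_connected _ _ _ _, ?_, ?_⟩
    · show (↑S : Set V) ⊆ insert c ↑(S.erase c)
      rw [← Finset.coe_insert, Finset.insert_erase hc]
    · rw [starSub_edge_card, Finset.card_erase_of_mem hc]
  refine le_antisymm (Nat.sInf_le hmem) (le_csInf ⟨_, hmem⟩ ?_)
  intro m hm
  have := aux_steiner_lb hm
  omega

lemma steinerDist_eq_of_out {S : Finset V} {c : V} (hc : c ∉ S)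
    (hadj : ∀ u ∈ S, G.Adj c u)
    (hsep : ∀ H : G.Subgraph, H.Connected → ↑S ⊆ H.verts → c ∈ H.verts) :
    steinerDist G ↑S = S.card := by
  have hmem : S.card ∈
      {m | ∃ H : G.Subgraph, H.Connected ∧ ↑S ⊆ H.verts ∧ H.edgeSet.ncard = m} := by
    refine ⟨starSub G c S hadj, starSub_connected _ _ _ _, ?_, ?_⟩
    · exact fun x hx => Set.mem_insert_of_mem _ hx
    · rw [starSub_edge_card]
  refine le_antisymm (Nat.sInf_le hmem) (le_csInf ⟨_, hmem⟩ ?_)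
  intro m hm
  obtain ⟨H, hHc, hHS, rfl⟩ := hm
  have hcH : c ∈ H.verts := hsep H hHc hHS
  have hsub : insert c ↑S ⊆ H.verts := Set.insert_subset hcH hHS
  have h1 : (insert c ↑S : Set V).ncard ≤ H.verts.ncard :=
    Set.ncard_le_ncard hsub (Set.toFinite _)
  rw [Set.ncard_insert_of_notMem (by simpa using hc) (Set.toFinite _),
    Set.ncard_coe_finset] at h1
  have := aux_subgraph_verts_le hHc
  omega

end

lemma aux_count_mem {V : Type*} [Fintype V] (v : V) {k : ℕ} (hk : 1 ≤ k) :
    ((Finset.powersetCard k (Finset.univ : Finset V)).filter (fun S => v ∈ S)).card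
      = (Fintype.card V - 1).choose (k - 1) := by
  rw [← Finset.card_univ, ← Finset.card_erase_of_mem (Finset.mem_univ v),
    ← Finset.card_powersetCard]
  apply Finset.card_bij (fun S _ => S.erase v)
  · intro S hS
    rw [Finset.mem_filter, Finset.mem_powersetCard] at hS
    rw [Finset.mem_powersetCard]
    exact ⟨Finset.erase_subset_erase v (Finset.subset_univ S),
      by rw [Finset.card_erase_of_mem hS.2, hS.1.2]⟩
  · intro S hS T hT h
    rw [Finset.mem_filter] at hS hT
    rw [← Finset.insert_erase hS.2, ← Finset.insert_erase hT.2, h]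
  · intro T hT
    rw [Finset.mem_powersetCard] at hT
    have hvT : v ∉ T := fun h => (Finset.mem_erase.mp (hT.1 h)).1 rfl
    refine ⟨insert v T, ?_, by rw [Finset.erase_insert hvT]⟩
    rw [Finset.mem_filter, Finset.mem_powersetCard]
    refine ⟨⟨Finset.subset_univ _, ?_⟩, Finset.mem_insert_self v T⟩
    rw [Finset.card_insert_of_notMem hvT, hT.2]
    omega

lemma aux_count_sub {V : Type*} [Fintype V] (Q : Finset V) (k : ℕ) :
    ((Finset.powersetCard k (Finset.univ : Finset V)).filter (fun S => S ⊆ Q)).card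
      = Q.card.choose k := by
  rw [← Finset.card_powersetCard]
  congr 1
  ext S
  rw [Finset.mem_filter, Finset.mem_powersetCard, Finset.mem_powersetCard]
  constructor
  · rintro ⟨⟨-, h2⟩, h3⟩; exact ⟨h3, h2⟩
  · rintro ⟨h1, h2⟩; exact ⟨⟨Finset.subset_univ _, h2⟩, h1⟩

/-- Steiner k-Wiener index of a star-like block graph (a block graph with a universal
vertex) with blocks of orders b_1,...,b_t:
SW_k(G) = (n-1)*C(n-1,k-1) - sum_i C(b_i - 1, k), stated additively. -/
theorem stmt10 {V : Type*} [Fintype V] (G : SimpleGraph V) (hbg : IsBlockGraph G)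
    (hstar : ∃ v : V, ∀ u : V, u ≠ v → G.Adj v u)
    (t : ℕ) (Bl : Fin t → Set V) (hB : ∀ i, IsBlock G (Bl i))
    (hinj : Function.Injective Bl) (hall : ∀ C : Set V, IsBlock G C → ∃ i, C = Bl i)
    (k : ℕ) (hk : 2 ≤ k) (hk' : k ≤ Fintype.card V) :
    steinerWiener G k + ∑ i : Fin t, ((Bl i).ncard - 1).choose k
      = (Fintype.card V - 1) * (Fintype.card V - 1).choose (k - 1) := by
  classical
  obtain ⟨v, huniv⟩ := hstar
  have hclique : ∀ B : Set V, IsBlock G B → G.IsClique B := hbg.2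
  have hvB : ∀ i, v ∈ Bl i := fun i => aux_v_mem_block huniv (hB i)
  have hdisj : ∀ i j : Fin t, ∀ u : V, u ≠ v → u ∈ Bl i → u ∈ Bl j → i = j := by
    intro i j u hu hui huj
    exact hinj (aux_blocks_eq huniv (hB i) (hB j) (hclique _ (hB i)) (hclique _ (hB j))
      hu hui huj)
  have hcov : ∀ u : V, u ≠ v → ∃ i, u ∈ Bl i := by
    intro u hu
    have hcl : G.IsClique {v, u} :=
      SimpleGraph.isClique_pair.mpr (fun _ => huniv u hu)
    have h2 : 2 ≤ ({v, u} : Set V).ncard := (Set.ncard_pair (Ne.symm hu)).ge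
    obtain ⟨B, hBb, hsub⟩ := aux_exists_block h2
      (aux_clique_biconn G hcl ⟨v, Set.mem_insert _ _⟩)
    obtain ⟨i, rfl⟩ := hall B hBb
    exact ⟨i, hsub (Set.mem_insert_of_mem _ rfl)⟩
  set PS := Finset.powersetCard k (Finset.univ : Finset V) with hPS
  have hcard : ∀ S ∈ PS, S.card = k := fun S hS => (Finset.mem_powersetCard.mp hS).2
  -- distances
  have hd : ∀ S ∈ PS,
      steinerDist G ↑S + (if (v ∈ S ∨ ∃ i, ↑S ⊆ Bl i) then 1 else 0) = k := by
    intro S hS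
    have hSk := hcard S hS
    have hSne : S.Nonempty := Finset.card_pos.mp (by omega)
    by_cases hcheap : v ∈ S ∨ ∃ i, ↑S ⊆ Bl i
    · rw [if_pos hcheap]
      have hdist : steinerDist G ↑S = k - 1 := by
        by_cases hvS : v ∈ S
        · rw [steinerDist_eq_of_center hvS (fun u _ hne => huniv u hne), hSk]
        · obtain ⟨i, hi⟩ := hcheap.resolve_left hvS
          obtain ⟨c, hc⟩ := hSne
          have hadj : ∀ u ∈ S, u ≠ c → G.Adj c u := by
            intro u hu hne
            exact hclique _ (hB i) (hi hc) (hi hu) (Ne.symm hne)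
          rw [steinerDist_eq_of_center hc hadj, hSk]
      rw [hdist]; omega
    · rw [if_neg hcheap]
      push_neg at hcheap
      obtain ⟨hvS, hnall⟩ := hcheap
      have hsep : ∀ H : G.Subgraph, H.Connected → ↑S ⊆ H.verts → v ∈ H.verts := by
        intro H hHc hHS
        obtain ⟨x, hx⟩ := hSne
        have hxv : x ≠ v := fun h => hvS (h ▸ hx)
        obtain ⟨i, hxi⟩ := hcov x hxv
        obtain ⟨y, hyS, hyi⟩ := Set.not_subset.mp (hnall i)
        obtain ⟨p⟩ := hHc.coe.preconnected ⟨x, hHS (by exact_mod_cast hx)⟩ ⟨y, hHS hyS⟩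
        have hvsup : v ∈ (p.map H.hom).support :=
          aux_walk_sep huniv hclique (hB i) (p.map H.hom) hxi hxv hyi
        rw [SimpleGraph.Walk.support_map] at hvsup
        obtain ⟨a, _, hav⟩ := List.mem_map.mp hvsup
        exact hav ▸ a.2
      rw [steinerDist_eq_of_out hvS (fun u hu => huniv u (fun h => hvS (h ▸ hu))) hsep, hSk]
      omega
    -- end hd
  have hsum : steinerWiener G k
      + (PS.filter (fun S => v ∈ S ∨ ∃ i, ↑S ⊆ Bl i)).card = k * PS.card := by
    rw [Finset.card_filter]
    simp only [steinerWiener, ← hPS]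
    rw [← Finset.sum_add_distrib, Finset.sum_congr rfl hd, Finset.sum_const, smul_eq_mul,
      mul_comm]
  have hsplit : (PS.filter (fun S => v ∈ S ∨ ∃ i, ↑S ⊆ Bl i)).card
      = (PS.filter (fun S => v ∈ S)).card
        + (PS.filter (fun S => v ∉ S ∧ ∃ i, ↑S ⊆ Bl i)).card := by
    rw [← Finset.card_union_of_disjoint (by
      rw [Finset.disjoint_left]
      intro S hS hS'
      exact ((Finset.mem_filter.mp hS').2).1 (Finset.mem_filter.mp hS).2)]
    congr 1
    rw [← Finset.filter_or]
    apply Finset.filter_congr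
    intro S _
    by_cases hvS : v ∈ S <;> simp [hvS]
  have hpart : (PS.filter (fun S => v ∉ S ∧ ∃ i, ↑S ⊆ Bl i)).card
      = ∑ i : Fin t, (PS.filter (fun S => v ∉ S ∧ ↑S ⊆ Bl i)).card := by
    have hU : PS.filter (fun S => v ∉ S ∧ ∃ i, ↑S ⊆ Bl i)
        = Finset.univ.biUnion (fun i : Fin t => PS.filter (fun S => v ∉ S ∧ ↑S ⊆ Bl i)) := by
      ext S
      simp only [Finset.mem_filter, Finset.mem_biUnion, Finset.mem_univ, true_and]
      tauto
    rw [hU, Finset.card_biUnion]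
    intro i _ j _ hij
    rw [Function.onFun, Finset.disjoint_left]
    rintro S hSi hSj
    obtain ⟨hSPS, hvS, hSi'⟩ := Finset.mem_filter.mp hSi
    obtain ⟨-, -, hSj'⟩ := Finset.mem_filter.mp hSj
    have hSne : S.Nonempty := Finset.card_pos.mp (by rw [hcard S hSPS]; omega)
    obtain ⟨x, hx⟩ := hSne
    exact hij (hdisj i j x (fun h => hvS (h ▸ hx)) (hSi' hx) (hSj' hx))
  have hA : (PS.filter (fun S => v ∈ S)).card = (Fintype.card V - 1).choose (k - 1) :=
    aux_count_mem v (by omega)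
  have hci : ∀ i : Fin t, (PS.filter (fun S => v ∉ S ∧ ↑S ⊆ Bl i)).card
      = ((Bl i).ncard - 1).choose k := by
    intro i
    have hQ : PS.filter (fun S => v ∉ S ∧ ↑S ⊆ Bl i)
        = PS.filter (fun S => S ⊆ (Bl i).toFinset.erase v) := by
      apply Finset.filter_congr
      intro S _
      constructor
      · rintro ⟨hvS, hSi⟩ x hx
        exact Finset.mem_erase.mpr ⟨fun h => hvS (h ▸ hx), Set.mem_toFinset.mpr (hSi hx)⟩
      · intro hsub
        refine ⟨fun h => (Finset.mem_erase.mp (hsub h)).1 rfl, fun x hx => ?_⟩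
        exact Set.mem_toFinset.mp (Finset.mem_erase.mp (hsub hx)).2
    rw [hQ, aux_count_sub, Finset.card_erase_of_mem (Set.mem_toFinset.mpr (hvB i)),
      ← Set.ncard_eq_toFinset_card']
  have hPScard : PS.card = (Fintype.card V).choose k := by
    rw [hPS, Finset.card_powersetCard, Finset.card_univ]
  have hn2 : 2 ≤ Fintype.card V := le_trans hk hk'
  have key : k * (Fintype.card V).choose k
      = Fintype.card V * (Fintype.card V - 1).choose (k - 1) := by
    obtain ⟨m, hm⟩ : ∃ m, Fintype.card V = m + 1 := ⟨Fintype.card V - 1, by omega⟩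
    obtain ⟨l, hl⟩ : ∃ l, k = l + 1 := ⟨k - 1, by omega⟩
    rw [hm, hl]
    simp only [Nat.add_sub_cancel]
    have h := Nat.add_one_mul_choose_eq m l
    rw [h]
    ring
  -- final assembly
  have hfinal : (steinerWiener G k + ∑ i : Fin t, ((Bl i).ncard - 1).choose k)
      + (Fintype.card V - 1).choose (k - 1)
      = ((Fintype.card V - 1) * (Fintype.card V - 1).choose (k - 1))
      + (Fintype.card V - 1).choose (k - 1) := by
    have e1 : ∑ i : Fin t, ((Bl i).ncard - 1).choose k
        = ∑ i : Fin t, (PS.filter (fun S => v ∉ S ∧ ↑S ⊆ Bl i)).card :=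
      Finset.sum_congr rfl (fun i _ => (hci i).symm)
    have e2 : (Fintype.card V - 1) * (Fintype.card V - 1).choose (k - 1)
        + (Fintype.card V - 1).choose (k - 1)
        = Fintype.card V * (Fintype.card V - 1).choose (k - 1) := by
      obtain ⟨m, hm⟩ : ∃ m, Fintype.card V = m + 1 := ⟨Fintype.card V - 1, by omega⟩
      rw [hm]
      simp only [Nat.add_sub_cancel]
      ring
    rw [e1, e2, ← key, ← hPScard]
    rw [← hsum, ← hA]
    rw [hsplit, hpart] at hsum ⊢
    omega
  exact Nat.add_right_cancel hfinal
end
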